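/- arXiv:2111.07134 — 10 statements merged into one kernel-verified Lean document; each statement's English description precedes it below -/
import Mathlib

section
/- The system of equations (λ(s)/p(s))·q(s)²/(1−q(s)) = Φ(q) for all s ∈ S has at most one solution q ∈ (0,1)^S. -/
open Set

/-- Key inequality: (2-x)·log(1-x) + 2x < 0 on (0,1). -/
lemma aux_log_ineq {x : ℝ} (hx0 : 0 < x) (hx1 : x < 1) :
    (2 - x) * Real.log (1 - x) + 2 * x < 0 := by
  set F : ℝ → ℝ := fun y => -((2 - y) * Real.log (1 - y) + 2 * y) with hF
  have key : StrictMonoOn F (Set.Ico 0 1) := by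
    apply strictMonoOn_of_deriv_pos (convex_Ico 0 1)
    · have hlog : ContinuousOn (fun y : ℝ => Real.log (1 - y)) (Set.Ico 0 1) := by
        apply ContinuousOn.log
        · fun_prop
        · intro y hy
          have := hy.2
          simp only [Set.mem_Ico] at hy
          nlinarith [hy.1, hy.2]
      fun_prop
    · intro y hy
      rw [interior_Ico] at hy
      obtain ⟨hy0, hy1⟩ := hy
      have h1y : (0:ℝ) < 1 - y := by linarith
      have hlog : HasDerivAt (fun z : ℝ => Real.log (1 - z)) ((1 - y)⁻¹ * (-1)) y := by
        have h1 : HasDerivAt (fun z : ℝ => 1 - z) (-1) y := (hasDerivAt_id y).const_sub 1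
        exact (Real.hasDerivAt_log h1y.ne').comp y h1
      have hmul : HasDerivAt (fun z : ℝ => (2 - z) * Real.log (1 - z))
          ((-1) * Real.log (1 - y) + (2 - y) * ((1 - y)⁻¹ * (-1))) y :=
        ((hasDerivAt_id y).const_sub 2).mul hlog
      have hlin : HasDerivAt (fun z : ℝ => 2 * z) 2 y := by
        simpa using (hasDerivAt_id y).const_mul 2
      have hd : HasDerivAt F (-((-1) * Real.log (1 - y) + (2 - y) * ((1 - y)⁻¹ * (-1)) + 2)) y :=
        (hmul.add hlin).neg
      rw [hd.deriv]
      have hlt : Real.log ((1 - y)⁻¹) < (1 - y)⁻¹ - 1 :=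
        Real.log_lt_sub_one_of_pos (by positivity) (by
          intro h
          have : (1:ℝ) - y = 1 := by
            field_simp at h
            linarith
          linarith)
      rw [Real.log_inv] at hlt
      have hid : (1 - y)⁻¹ - 1 = y / (1 - y) := by field_simp; ring
      have hyy : 0 < y / (1 - y) := by positivity
      have : (1 - y) * (1 - y)⁻¹ = 1 := mul_inv_cancel₀ h1y.ne'
      nlinarith [hlt]
  have h0 : F 0 = 0 := by simp [hF]
  have hx : F 0 < F x := key (by constructor <;> norm_num) ⟨hx0.le, hx1⟩ hx0
  rw [h0] at hx
  simp only [hF] at hx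
  linarith

/-- ψ(x) = (−log(1−x)−x)(1−x)/x² is strictly decreasing on (0,1). -/
lemma psi_strictAnti :
    StrictAntiOn (fun x : ℝ => (-Real.log (1 - x) - x) * (1 - x) / x ^ 2) (Set.Ioo 0 1) := by
  apply strictAntiOn_of_deriv_neg (convex_Ioo 0 1)
  · apply ContinuousOn.div
    · apply ContinuousOn.mul
      · apply ContinuousOn.sub
        · apply ContinuousOn.neg
          apply ContinuousOn.log
          · fun_prop
          · intro y hy
            simp only [Set.mem_Ioo] at hy
            nlinarith [hy.1, hy.2]
        · fun_prop
      · fun_prop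
    · fun_prop
    · intro y hy
      simp only [Set.mem_Ioo] at hy
      exact pow_ne_zero 2 (ne_of_gt hy.1)
  · intro y hy
    rw [interior_Ioo] at hy
    obtain ⟨hy0, hy1⟩ := hy
    have h1y : (0:ℝ) < 1 - y := by linarith
    have hlog : HasDerivAt (fun z : ℝ => Real.log (1 - z)) ((1 - y)⁻¹ * (-1)) y := by
      have h1 : HasDerivAt (fun z : ℝ => 1 - z) (-1) y := (hasDerivAt_id y).const_sub 1
      exact (Real.hasDerivAt_log h1y.ne').comp y h1
    have hg : HasDerivAt (fun z : ℝ => -Real.log (1 - z) - z)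
        (-((1 - y)⁻¹ * (-1)) - 1) y := hlog.neg.sub (hasDerivAt_id y)
    have h1m : HasDerivAt (fun z : ℝ => 1 - z) (-1) y := (hasDerivAt_id y).const_sub 1
    have hn : HasDerivAt (fun z : ℝ => (-Real.log (1 - z) - z) * (1 - z))
        ((-((1 - y)⁻¹ * (-1)) - 1) * (1 - y) + (-Real.log (1 - y) - y) * (-1)) y := hg.mul h1m
    have hx2 : HasDerivAt (fun z : ℝ => z ^ 2) (2 * y) y := by
      simpa using hasDerivAt_pow 2 y
    have hd : HasDerivAt (fun z : ℝ => (-Real.log (1 - z) - z) * (1 - z) / z ^ 2)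
        ((((-((1 - y)⁻¹ * (-1)) - 1) * (1 - y) + (-Real.log (1 - y) - y) * (-1)) * y ^ 2
          - (-Real.log (1 - y) - y) * (1 - y) * (2 * y)) / (y ^ 2) ^ 2) y :=
      hn.div hx2 (by positivity)
    rw [hd.deriv]
    have hnum : (((-((1 - y)⁻¹ * (-1)) - 1) * (1 - y) + (-Real.log (1 - y) - y) * (-1)) * y ^ 2
          - (-Real.log (1 - y) - y) * (1 - y) * (2 * y))
        = y * ((2 - y) * Real.log (1 - y) + 2 * y) := by
      field_simp
      ring
    rw [hnum]
    apply div_neg_of_neg_of_pos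
    · exact mul_neg_of_pos_of_neg hy0 (aux_log_ineq hy0 hy1)
    · positivity

lemma g_pos {x : ℝ} (hx0 : 0 < x) (hx1 : x < 1) : 0 < -Real.log (1 - x) - x := by
  have h1y : (0:ℝ) < 1 - x := by linarith
  have := Real.log_lt_sub_one_of_pos h1y (by linarith)
  linarith

section main

variable {S : Type*} [Fintype S] [Nonempty S]

/-- From a solution, derive the cleared per-coordinate equation and the summed identity. -/
lemma solution_facts
    (lam : S → ℝ) (p : S → ℕ)
    (hlam : ∀ s, lam s ∈ Set.Ioo (0:ℝ) 1) (hp : ∀ s, 1 ≤ p s)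
    (c : ℝ) (q : S → ℝ)
    (hq : ∀ s, q s ∈ Set.Ioo (0:ℝ) 1)
    (hc : c = (-∑ t, lam t * Real.log (1 - q t)) / (1 + ∑ t, (p t : ℝ) * (1 - q t) / q t))
    (heq : ∀ s, lam s / (p s : ℝ) * (q s) ^ 2 / (1 - q s) = c) :
    (∀ s, lam s * q s ^ 2 = c * p s * (1 - q s)) ∧
      (∑ t, lam t * (-Real.log (1 - q t) - q t) = c) ∧ 0 < c := by
  have hps : ∀ s, (0:ℝ) < p s := fun s => by exact_mod_cast Nat.lt_of_lt_of_le Nat.zero_lt_one (hp s)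
  have hq0 : ∀ s, 0 < q s := fun s => (hq s).1
  have hq1 : ∀ s, q s < 1 := fun s => (hq s).2
  have h1q : ∀ s, (0:ℝ) < 1 - q s := fun s => by have := hq1 s; linarith
  have hA : ∀ s, lam s * q s ^ 2 = c * p s * (1 - q s) := by
    intro s
    have h := heq s
    have h1 := (h1q s).ne'
    have h2 := (hps s).ne'
    field_simp at h
    linarith
  have hB : ∑ t, lam t * (-Real.log (1 - q t) - q t) = c := by
    have hU : 0 < 1 + ∑ t, (p t : ℝ) * (1 - q t) / q t := by
      have : 0 ≤ ∑ t, (p t : ℝ) * (1 - q t) / q t :=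
        Finset.sum_nonneg fun t _ => by
          have := hq0 t; have := h1q t; have := hps t; positivity
      linarith
    have hV : c * (1 + ∑ t, (p t : ℝ) * (1 - q t) / q t)
        = -∑ t, lam t * Real.log (1 - q t) := by
      rw [hc]; exact div_mul_cancel₀ _ hU.ne'
    have hterm : ∀ t : S, c * ((p t : ℝ) * (1 - q t) / q t) = lam t * q t := by
      intro t
      have h1 := (hq0 t).ne'
      field_simp
      linarith [hA t]
    have hsum : c * (∑ t, (p t : ℝ) * (1 - q t) / q t) = ∑ t, lam t * q t := by
      rw [Finset.mul_sum]
      exact Finset.sum_congr rfl fun t _ => hterm t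
    have expand : ∑ t, lam t * (-Real.log (1 - q t) - q t)
        = (-∑ t, lam t * Real.log (1 - q t)) - ∑ t, lam t * q t := by
      rw [← Finset.sum_neg_distrib, ← Finset.sum_sub_distrib]
      exact Finset.sum_congr rfl fun t _ => by ring
    rw [expand, ← hV, ← hsum]
    ring
  refine ⟨hA, hB, ?_⟩
  rw [← hB]
  apply Finset.sum_pos _ Finset.univ_nonempty
  intro t _
  exact mul_pos (hlam t).1 (g_pos (hq0 t) (hq1 t))

/-- The strict comparison: two solutions cannot have Φ q < Φ q'. -/
lemma no_strict_lt
    (lam : S → ℝ) (p : S → ℕ)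
    (hlam : ∀ s, lam s ∈ Set.Ioo (0:ℝ) 1) (hp : ∀ s, 1 ≤ p s)
    (c c' : ℝ) (q q' : S → ℝ)
    (hq : ∀ s, q s ∈ Set.Ioo (0:ℝ) 1) (hq' : ∀ s, q' s ∈ Set.Ioo (0:ℝ) 1)
    (hA : ∀ s, lam s * q s ^ 2 = c * p s * (1 - q s))
    (hA' : ∀ s, lam s * q' s ^ 2 = c' * p s * (1 - q' s))
    (hB : ∑ t, lam t * (-Real.log (1 - q t) - q t) = c)
    (hB' : ∑ t, lam t * (-Real.log (1 - q' t) - q' t) = c')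
    (hc : 0 < c) (hc' : 0 < c')
    (hlt : c < c') : False := by
  have hps : ∀ s, (0:ℝ) < p s := fun s => by exact_mod_cast Nat.lt_of_lt_of_le Nat.zero_lt_one (hp s)
  -- q s < q' s for each s
  have hqq' : ∀ s, q s < q' s := by
    intro s
    by_contra h
    push_neg at h
    have h1 := (hq s).1; have h2 := (hq s).2
    have h3 := (hq' s).1; have h4 := (hq' s).2
    have hl := (hlam s).1
    have hpk := hps s
    have k0 : (0:ℝ) < c * (p s : ℝ) := mul_pos hc hpk
    have k1 : c * (p s : ℝ) * (1 - q s) ≤ c * (p s : ℝ) * (1 - q' s) :=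
      mul_le_mul_of_nonneg_left (by linarith) k0.le
    have k2 : c * (p s : ℝ) * (1 - q' s) < c' * (p s : ℝ) * (1 - q' s) :=
      mul_lt_mul_of_pos_right (mul_lt_mul_of_pos_right hlt hpk) (by linarith)
    have k3 : lam s * q' s ^ 2 ≤ lam s * q s ^ 2 :=
      mul_le_mul_of_nonneg_left (by nlinarith) hl.le
    linarith [hA s, hA' s]
  -- per-coordinate strict inequality
  have hper : ∀ s : S, lam s * (-Real.log (1 - q' s) - q' s) * c
      < lam s * (-Real.log (1 - q s) - q s) * c' := by
    intro s
    have h1 := (hq s).1; have h2 := (hq s).2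
    have h3 := (hq' s).1; have h4 := (hq' s).2
    have hl := (hlam s).1
    have hpsi := psi_strictAnti ⟨h1, h2⟩ ⟨h3, h4⟩ (hqq' s)
    simp only at hpsi
    rw [div_lt_div_iff₀ (by positivity) (by positivity)] at hpsi
    -- hpsi : (-log(1-q') - q')*(1-q') * q^2 < (-log(1-q) - q)*(1-q) * q'^2
    set gs := -Real.log (1 - q s) - q s with hgs
    set gs' := -Real.log (1 - q' s) - q' s with hgs'
    have hP : (0:ℝ) < (p s : ℝ) * ((1 - q s) * (1 - q' s)) := by
      have k1 : (0:ℝ) < 1 - q s := by linarith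
      have k2 : (0:ℝ) < 1 - q' s := by linarith
      exact mul_pos (hps s) (mul_pos k1 k2)
    rw [← mul_lt_mul_iff_left₀ hP]
    have e1 : lam s * gs' * c * ((p s : ℝ) * ((1 - q s) * (1 - q' s)))
        = lam s ^ 2 * (gs' * (1 - q' s) * q s ^ 2) := by
      linear_combination (-(lam s * gs' * (1 - q' s))) * hA s
    have e2 : lam s * gs * c' * ((p s : ℝ) * ((1 - q s) * (1 - q' s)))
        = lam s ^ 2 * (gs * (1 - q s) * q' s ^ 2) := by
      linear_combination (-(lam s * gs * (1 - q s))) * hA' s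
    have hmul : lam s ^ 2 * (gs' * (1 - q' s) * q s ^ 2)
        < lam s ^ 2 * (gs * (1 - q s) * q' s ^ 2) :=
      mul_lt_mul_of_pos_left hpsi (by positivity)
    linarith
  have hsum : ∑ s, lam s * (-Real.log (1 - q' s) - q' s) * c
      < ∑ s, lam s * (-Real.log (1 - q s) - q s) * c' :=
    Finset.sum_lt_sum_of_nonempty Finset.univ_nonempty fun s _ => hper s
  rw [← Finset.sum_mul, ← Finset.sum_mul, hB, hB'] at hsum
  nlinarith [hsum]

end main

/-- The system of equations (λ(s)/p(s))·q(s)²/(1−q(s)) = Φ(q) for all s ∈ S has at most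
one solution q ∈ (0,1)^S, where Φ(q) = V(q)/U(q) with
V(q) = −∑ λ(t)·log(1−q(t)) and U(q) = 1 + ∑ p(t)·(1−q(t))/q(t). -/
theorem at_most_one_solution
    {S : Type*} [Fintype S] [Nonempty S]
    (lam : S → ℝ) (p : S → ℕ)
    (hlam : ∀ s, lam s ∈ Set.Ioo (0:ℝ) 1) (hp : ∀ s, 1 ≤ p s)
    (Φ : (S → ℝ) → ℝ)
    (hΦ : ∀ q : S → ℝ, Φ q =
      (-∑ t, lam t * Real.log (1 - q t)) / (1 + ∑ t, (p t : ℝ) * (1 - q t) / q t))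
    (q q' : S → ℝ)
    (hq : ∀ s, q s ∈ Set.Ioo (0:ℝ) 1) (hq' : ∀ s, q' s ∈ Set.Ioo (0:ℝ) 1)
    (heq : ∀ s, lam s / (p s : ℝ) * (q s) ^ 2 / (1 - q s) = Φ q)
    (heq' : ∀ s, lam s / (p s : ℝ) * (q' s) ^ 2 / (1 - q' s) = Φ q') :
    q = q' := by
  obtain ⟨hA, hB, hc⟩ := solution_facts lam p hlam hp (Φ q) q hq (hΦ q) heq
  obtain ⟨hA', hB', hc'⟩ := solution_facts lam p hlam hp (Φ q') q' hq' (hΦ q') heq'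
  have hcc : Φ q = Φ q' := by
    rcases lt_trichotomy (Φ q) (Φ q') with h | h | h
    · exact absurd (no_strict_lt lam p hlam hp _ _ q q' hq hq' hA hA' hB hB' hc hc' h) id
    · exact h
    · exact absurd (no_strict_lt lam p hlam hp _ _ q' q hq' hq hA' hA hB' hB hc' hc h) id
  funext s
  have h1 := (hq s).1; have h2 := (hq s).2
  have h3 := (hq' s).1; have h4 := (hq' s).2
  have hl := (hlam s).1
  have hps : (0:ℝ) < p s := by exact_mod_cast Nat.lt_of_lt_of_le Nat.zero_lt_one (hp s)
  have e1 := hA s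
  have e2 := hA' s
  rw [← hcc] at e2
  rcases lt_trichotomy (q s) (q' s) with h | h | h
  · exfalso
    have hA2 : lam s * q s ^ 2 < lam s * q' s ^ 2 :=
      mul_lt_mul_of_pos_left (by nlinarith) hl
    have hB2 : Φ q * (p s : ℝ) * (1 - q' s) < Φ q * (p s : ℝ) * (1 - q s) :=
      mul_lt_mul_of_pos_left (by linarith) (mul_pos hc hps)
    linarith
  · exact h
  · exfalso
    have hA2 : lam s * q' s ^ 2 < lam s * q s ^ 2 :=
      mul_lt_mul_of_pos_left (by nlinarith) hl
    have hB2 : Φ q * (p s : ℝ) * (1 - q s) < Φ q * (p s : ℝ) * (1 - q' s) :=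
      mul_lt_mul_of_pos_left (by linarith) (mul_pos hc hps)
    linarith
end

section
/- If ∑_{s∈S} p(s) ≥ 3, then the fixed point equation z = Φ(q_z) has exactly one solution z ∈ (0,∞). -/
open Real Set

set_option maxHeartbeats 1000000


/-- Padé-type lower bound for -log(1-q). -/
lemma log_lb {q : ℝ} (hq : q ∈ Set.Ioo (0:ℝ) 1) : 2*q/(2-q) < -Real.log (1-q) := by
  obtain ⟨h0, h1⟩ := hq
  have key : StrictMonoOn (fun x : ℝ => -Real.log (1-x) - 2*x/(2-x)) (Set.Ico (0:ℝ) 1) := by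
    have hderiv : ∀ x ∈ Set.Ico (0:ℝ) 1,
        HasDerivAt (fun x : ℝ => -Real.log (1-x) - 2*x/(2-x))
          (-((1-x)⁻¹ * (-1)) - (2*(2-x) - 2*x*(-1))/(2-x)^2) x := by
      intro x hx
      have h1x : (1:ℝ) - x ≠ 0 := by
        have := hx.2; intro h; nlinarith [hx.1]
      have h2x : (2:ℝ) - x ≠ 0 := by
        have := hx.2; intro h; nlinarith [hx.1]
      have hlog : HasDerivAt (fun y : ℝ => Real.log (1-y)) ((1-x)⁻¹ * (-1)) x := by
        have h' : HasDerivAt (fun y : ℝ => 1 - y) (-1) x := by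
          simpa using (hasDerivAt_id x).const_sub 1
        exact (Real.hasDerivAt_log h1x).comp x h'
      have hdiv : HasDerivAt (fun y : ℝ => 2*y/(2-y)) ((2*(2-x) - 2*x*(-1))/(2-x)^2) x := by
        have hn : HasDerivAt (fun y : ℝ => 2*y) 2 x := by
          simpa using (hasDerivAt_id x).const_mul 2
        have hd : HasDerivAt (fun y : ℝ => 2 - y) (-1) x := by
          simpa using (hasDerivAt_id x).const_sub 2
        exact hn.div hd h2x
      exact hlog.neg.sub hdiv
    apply strictMonoOn_of_deriv_pos (convex_Ico 0 1)
    · exact fun x hx => ((hderiv x hx).continuousAt).continuousWithinAt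
    · intro x hx
      rw [interior_Ico] at hx
      obtain ⟨hx0, hx1⟩ := hx
      rw [(hderiv x ⟨hx0.le, hx1⟩).deriv]
      have e : -((1-x)⁻¹ * (-1)) - (2*(2-x) - 2*x*(-1))/(2-x)^2
          = x^2 / ((1-x)*(2-x)^2) := by
        have h1x : (1:ℝ) - x ≠ 0 := by intro h; nlinarith
        have h2x : (2:ℝ) - x ≠ 0 := by intro h; nlinarith
        field_simp
        ring
      rw [e]
      have h' : (0:ℝ) < (1-x)*(2-x)^2 := by
        exact mul_pos (by linarith) (pow_pos (by linarith) 2)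
      exact div_pos (pow_pos hx0 2) h'
  have h := key (show (0:ℝ) ∈ Set.Ico (0:ℝ) 1 by constructor <;> norm_num)
    (show q ∈ Set.Ico (0:ℝ) 1 from ⟨h0.le, h1⟩) h0
  simp only [sub_zero, mul_zero, zero_div, Real.log_one, neg_zero] at h
  linarith [h]

noncomputable def psiFn (q : ℝ) : ℝ := (-Real.log (1-q) - q) * (1-q) / q^2

lemma psiFn_def (q : ℝ) : psiFn q = (-Real.log (1-q) - q) * (1-q) / q^2 := rfl

lemma u_lb {q : ℝ} (hq : q ∈ Set.Ioo (0:ℝ) 1) :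
    q^2/(2-q) < -Real.log (1-q) - q := by
  obtain ⟨h0, h1⟩ := hq
  have h := log_lb ⟨h0, h1⟩
  have h2 : (0:ℝ) < 2 - q := by linarith
  have e : 2*q/(2-q) - q = q^2/(2-q) := by field_simp; ring
  linarith [e]

lemma psi_hasDeriv {x : ℝ} (hx : x ∈ Set.Ioo (0:ℝ) 1) :
    HasDerivAt psiFn
      ((((-((1-x)⁻¹ * (-1)) - 1) * (1-x) + (-Real.log (1-x) - x) * (-1)) * x^2
        - (-Real.log (1-x) - x) * (1-x) * (2*x)) / (x^2)^2) x := by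
  obtain ⟨h0, h1⟩ := hx
  have h1x : (1:ℝ) - x ≠ 0 := by intro h; nlinarith
  have hx0 : x ≠ 0 := ne_of_gt h0
  have hlog : HasDerivAt (fun y : ℝ => Real.log (1-y)) ((1-x)⁻¹ * (-1)) x := by
    have h' : HasDerivAt (fun y : ℝ => 1 - y) (-1) x := by
      simpa using (hasDerivAt_id x).const_sub 1
    exact (Real.hasDerivAt_log h1x).comp x h'
  have hsub : HasDerivAt (fun y : ℝ => 1 - y) (-1) x := by
    simpa using (hasDerivAt_id x).const_sub 1
  have hu : HasDerivAt (fun y : ℝ => -Real.log (1-y) - y) (-((1-x)⁻¹ * (-1)) - 1) x :=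
    hlog.neg.sub (hasDerivAt_id x)
  have hN : HasDerivAt (fun y : ℝ => (-Real.log (1-y) - y) * (1-y))
      ((-((1-x)⁻¹ * (-1)) - 1) * (1-x) + (-Real.log (1-x) - x) * (-1)) x := hu.mul hsub
  have hD : HasDerivAt (fun y : ℝ => y^2) (2*x) x := by
    simpa [mul_comm] using (hasDerivAt_pow 2 x)
  exact hN.div hD (pow_ne_zero 2 hx0)

lemma psi_anti : StrictAntiOn psiFn (Set.Ioo (0:ℝ) 1) := by
  apply strictAntiOn_of_deriv_neg (convex_Ioo 0 1)
  · exact fun x hx => ((psi_hasDeriv hx).continuousAt).continuousWithinAt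
  · intro x hx
    rw [interior_Ioo] at hx
    obtain ⟨h0, h1⟩ := hx
    rw [(psi_hasDeriv ⟨h0, h1⟩).deriv]
    have h1x : (1:ℝ) - x ≠ 0 := by intro h; nlinarith
    have hx0 : x ≠ 0 := ne_of_gt h0
    set L : ℝ := -Real.log (1-x) with hL
    have e : (((-((1-x)⁻¹ * (-1)) - 1) * (1-x) + (L - x) * (-1)) * x^2
        - (L - x) * (1-x) * (2*x)) / (x^2)^2 = (x^2 - (L - x)*(2-x)) / x^3 := by
      field_simp
      ring
    rw [e]
    have hu := u_lb ⟨h0, h1⟩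
    rw [← hL] at hu
    have h2 : (0:ℝ) < 2 - x := by linarith
    have hnum : x^2 - (L - x)*(2-x) < 0 := by
      rw [div_lt_iff₀ h2] at hu
      linarith
    exact div_neg_of_neg_of_pos hnum (by positivity)

lemma psi_pos {q : ℝ} (hq : q ∈ Set.Ioo (0:ℝ) 1) : 0 < psiFn q := by
  obtain ⟨h0, h1⟩ := hq
  have hu := u_lb ⟨h0, h1⟩
  have h2 : (0:ℝ) < 2 - q := by linarith
  have hupos : 0 < -Real.log (1-q) - q := lt_trans (by positivity) hu
  unfold psiFn
  have : (0:ℝ) < 1 - q := by linarith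
  positivity

lemma psi_gt_third {q : ℝ} (hq : q ∈ Set.Ioo (0:ℝ) 1) (hhalf : q ≤ 1/2) :
    1/3 < psiFn q := by
  obtain ⟨h0, h1⟩ := hq
  have hu := u_lb ⟨h0, h1⟩
  have h2 : (0:ℝ) < 2 - q := by linarith
  have h1q : (0:ℝ) < 1 - q := by linarith
  rw [div_lt_iff₀ h2] at hu
  unfold psiFn
  rw [lt_div_iff₀ (by positivity : (0:ℝ) < q^2)]
  nlinarith [hu, mul_pos h0 h1q]

lemma neg_log_mul_le {t : ℝ} (ht0 : 0 < t) : (-Real.log t) * t ≤ 2 * Real.sqrt t := by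
  have hst : 0 < Real.sqrt t := Real.sqrt_pos.mpr ht0
  have h1 : Real.log ((Real.sqrt t)⁻¹) ≤ (Real.sqrt t)⁻¹ - 1 :=
    Real.log_le_sub_one_of_pos (by positivity)
  rw [Real.log_inv, Real.log_sqrt ht0.le] at h1
  have hlog : -Real.log t ≤ 2 / Real.sqrt t := by
    rw [div_eq_mul_inv]
    nlinarith [hst]
  have h2 := mul_le_mul_of_nonneg_right hlog ht0.le
  have e : 2 / Real.sqrt t * t = 2 * Real.sqrt t := by
    rw [div_mul_eq_mul_div, mul_div_assoc, Real.div_sqrt]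
  linarith [h2, e.le, e.ge]

lemma psi_ub {q : ℝ} (hq : q ∈ Set.Ioo (0:ℝ) 1) (hhalf : 1/2 ≤ q) :
    psiFn q < 8 * Real.sqrt (1-q) := by
  obtain ⟨h0, h1⟩ := hq
  have ht0 : (0:ℝ) < 1 - q := by linarith
  have hLt := neg_log_mul_le ht0
  unfold psiFn
  rw [div_lt_iff₀ (by positivity : (0:ℝ) < q^2)]
  have hq2 : (1:ℝ)/4 ≤ q^2 := by nlinarith
  nlinarith [hLt, mul_pos h0 ht0, Real.sqrt_nonneg (1-q),
    mul_nonneg (Real.sqrt_nonneg (1-q)) (sub_nonneg.mpr hq2)]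

noncomputable def Qf (c z : ℝ) : ℝ := (Real.sqrt (z^2 + 4*c*z) - z) / (2*c)

lemma Qf_spec {c z x : ℝ} (hc : 0 < c) (hx : x ∈ Set.Ioo (0:ℝ) 1)
    (heq : c * x^2 / (1-x) = z) : x = Qf c z := by
  obtain ⟨hx0, hx1⟩ := hx
  have h1x : (1:ℝ) - x ≠ 0 := by intro h; nlinarith
  have hquad : c * x^2 = z * (1-x) := by
    field_simp at heq
    linarith [heq]
  have hz : 0 < z := by
    have : 0 < c * x^2 := by positivity
    nlinarith [hquad]
  have hsq : z^2 + 4*c*z = (2*c*x + z)^2 := by nlinarith [hquad]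
  unfold Qf
  rw [hsq, Real.sqrt_sq (by positivity)]
  field_simp
  ring

lemma q_mono {c z1 z2 x y : ℝ} (hc : 0 < c) (hx : x ∈ Set.Ioo (0:ℝ) 1)
    (hy : y ∈ Set.Ioo (0:ℝ) 1) (e1 : c * x^2 / (1-x) = z1) (e2 : c * y^2 / (1-y) = z2)
    (h12 : z1 < z2) : x < y := by
  obtain ⟨hx0, hx1⟩ := hx
  obtain ⟨hy0, hy1⟩ := hy
  have h1x : (1:ℝ) - x ≠ 0 := by intro h; nlinarith
  have h1y : (1:ℝ) - y ≠ 0 := by intro h; nlinarith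
  have f1 : c * x^2 = z1 * (1-x) := by field_simp at e1; linarith [e1]
  have f2 : c * y^2 = z2 * (1-y) := by field_simp at e2; linarith [e2]
  by_contra h
  push_neg at h
  -- y ≤ x, so z2 (1-y)(1-x) = c y² (1-x) ≤ c x² (1-y) = z1 (1-x)(1-y)
  have key : c * y^2 * (1-x) ≤ c * x^2 * (1-y) := by nlinarith [mul_nonneg (sub_nonneg.mpr h) (by nlinarith : (0:ℝ) ≤ x + y - x*y)]
  have hpos : (0:ℝ) < (1-x) * (1-y) := by nlinarith
  nlinarith [key, f1, f2]

lemma Qf_cont {c : ℝ} (hc : 0 < c) : Continuous (fun z => Qf c z) := by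
  unfold Qf
  apply Continuous.div_const
  apply Continuous.sub _ continuous_id
  exact Real.continuous_sqrt.comp (by continuity)

lemma psi_contAt {x : ℝ} (hx : x ∈ Set.Ioo (0:ℝ) 1) : ContinuousAt psiFn x := by
  obtain ⟨h0, h1⟩ := hx
  have h1x : (1:ℝ) - x ≠ 0 := by intro h; nlinarith
  unfold psiFn
  apply ContinuousAt.div
  · apply ContinuousAt.mul
    · apply ContinuousAt.sub _ continuousAt_id
      exact ((Real.continuousAt_log h1x).comp
        ((continuous_const.sub continuous_id).continuousAt)).neg
    · exact (continuous_const.sub continuous_id).continuousAt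
  · exact (continuous_pow 2).continuousAt
  · exact pow_ne_zero 2 (ne_of_gt h0)

/-- If ∑ p(s) ≥ 3, then the fixed point equation z = Φ(q_z) has exactly one solution
z ∈ (0,∞), where q_z(s) is the unique x ∈ (0,1) with (λ(s)/p(s))·x²/(1−x) = z, and
Φ(q) = (−∑ λ(t)·log(1−q(t))) / (1 + ∑ p(t)·(1−q(t))/q(t)). -/
theorem fixed_point_unique
    {S : Type*} [Fintype S] [Nonempty S]
    (lam : S → ℝ) (p : S → ℕ)
    (hlam : ∀ s, lam s ∈ Set.Ioo (0:ℝ) 1) (hp : ∀ s, 1 ≤ p s)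
    (hP : 3 ≤ ∑ s, p s)
    (qz : ℝ → S → ℝ)
    (hqz : ∀ z > (0:ℝ), ∀ s, qz z s ∈ Set.Ioo (0:ℝ) 1 ∧
      lam s / (p s : ℝ) * (qz z s) ^ 2 / (1 - qz z s) = z) :
    ∃! z : ℝ, 0 < z ∧
      z = (-∑ t, lam t * Real.log (1 - qz z t)) /
        (1 + ∑ t, (p t : ℝ) * (1 - qz z t) / qz z t) := by
  classical
  have hply : ∀ s, (0:ℝ) < (p s : ℝ) := fun s => by
    exact_mod_cast Nat.lt_of_lt_of_le Nat.zero_lt_one (hp s)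
  set c : S → ℝ := fun s => lam s / (p s : ℝ) with hc
  have hc0 : ∀ s, 0 < c s := fun s => div_pos (hlam s).1 (hply s)
  have hc1 : ∀ s, c s < 1 := fun s =>
    (div_lt_one (hply s)).mpr (lt_of_lt_of_le (hlam s).2 (by exact_mod_cast hp s))
  set P : ℝ := ((∑ s, p s : ℕ) : ℝ) with hPdef
  have hP3 : (3:ℝ) ≤ P := by rw [hPdef]; exact_mod_cast hP
  have hP0 : (0:ℝ) < P := by linarith
  have hPsum : P = ∑ s, (p s : ℝ) := by rw [hPdef]; push_cast; ring
  have hmem : ∀ z, 0 < z → ∀ s, qz z s ∈ Set.Ioo (0:ℝ) 1 := fun z hz s => (hqz z hz s).1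
  have heqn : ∀ z, 0 < z → ∀ s, c s * (qz z s)^2 / (1 - qz z s) = z := by
    intro z hz s
    have h := (hqz z hz s).2
    simpa [hc] using h
  have hquad : ∀ z, 0 < z → ∀ s, c s * (qz z s)^2 = z * (1 - qz z s) := by
    intro z hz s
    have h := heqn z hz s
    have h1x : (1:ℝ) - qz z s ≠ 0 := ne_of_gt (by linarith [(hmem z hz s).2])
    field_simp at h
    linarith [h]
  have hQeq : ∀ z, 0 < z → ∀ s, qz z s = Qf (c s) z :=
    fun z hz s => Qf_spec (hc0 s) (hmem z hz s) (heqn z hz s)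
  set g : ℝ → ℝ := fun z => ∑ s, (p s : ℝ) * psiFn (qz z s) with hg
  -- key equivalence
  have hiff : ∀ z, 0 < z →
      ((z = (-∑ t, lam t * Real.log (1 - qz z t)) /
        (1 + ∑ t, (p t : ℝ) * (1 - qz z t) / qz z t)) ↔ g z = 1) := by
    intro z hz
    have hq := hmem z hz
    have h1 : ∀ t, lam t * (qz z t)^2 = (p t : ℝ) * z * (1 - qz z t) := by
      intro t
      have h := hquad z hz t
      simp only [hc] at h
      have hp0 : (p t : ℝ) ≠ 0 := ne_of_gt (hply t)
      field_simp at h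
      linarith [h]
    set A : ℝ := ∑ t, lam t * qz z t with hA
    have hApos : 0 < A :=
      Finset.sum_pos (fun t _ => mul_pos (hlam t).1 (hq t).1) Finset.univ_nonempty
    have hDen : (1 + ∑ t, (p t : ℝ) * (1 - qz z t) / qz z t) = (z + A)/z := by
      have e : ∀ t, (p t : ℝ) * (1 - qz z t) / qz z t = lam t * qz z t / z := by
        intro t
        have hq0 : qz z t ≠ 0 := ne_of_gt (hq t).1
        rw [div_eq_div_iff hq0 (ne_of_gt hz)]
        linear_combination -h1 t
      rw [Finset.sum_congr rfl (fun t _ => e t), ← Finset.sum_div, ← hA]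
      field_simp
    have hterm : ∀ t, z * ((p t : ℝ) * psiFn (qz z t))
        = lam t * (-Real.log (1 - qz z t) - qz z t) := by
      intro t
      have hq0 : qz z t ≠ 0 := ne_of_gt (hq t).1
      rw [psiFn_def]
      field_simp
      linear_combination (Real.log (1 - qz z t) + qz z t) * h1 t
    have hsum : z * g z = (-∑ t, lam t * Real.log (1 - qz z t)) - A := by
      simp only [hg]
      rw [Finset.mul_sum, Finset.sum_congr rfl (fun t _ => hterm t), hA]
      rw [← Finset.sum_neg_distrib, ← Finset.sum_sub_distrib]
      apply Finset.sum_congr rfl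
      intro t _
      ring
    have hzz : z * ((z+A)/z) = z + A := by field_simp
    have hzApos : (0:ℝ) < (z+A)/z := div_pos (by linarith) hz
    constructor
    · intro h
      rw [hDen, eq_div_iff (ne_of_gt hzApos)] at h
      rw [hzz] at h
      -- h : z + A = -∑ ...
      have h2 : z * g z = z * 1 := by rw [hsum, mul_one]; linarith
      exact mul_left_cancel₀ (ne_of_gt hz) h2
    · intro h
      rw [hDen, eq_div_iff (ne_of_gt hzApos), hzz]
      have h2 : z * g z = z := by rw [h, mul_one]
      rw [hsum] at h2
      linarith
  -- strict antitonicity of g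
  have hganti : ∀ z1 z2, 0 < z1 → z1 < z2 → g z2 < g z1 := by
    intro z1 z2 h1 h12
    have h2 : 0 < z2 := h1.trans h12
    simp only [hg]
    apply Finset.sum_lt_sum_of_nonempty Finset.univ_nonempty
    intro s _
    have hlt : qz z1 s < qz z2 s :=
      q_mono (hc0 s) (hmem z1 h1 s) (hmem z2 h2 s) (heqn z1 h1 s) (heqn z2 h2 s) h12
    exact mul_lt_mul_of_pos_left (psi_anti (hmem z1 h1 s) (hmem z2 h2 s) hlt) (hply s)
  -- small z
  set m : ℝ := Finset.univ.inf' Finset.univ_nonempty c with hm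
  have hm0 : 0 < m := (Finset.lt_inf'_iff _).mpr (fun s _ => hc0 s)
  have hm1 : m < 1 := by
    obtain ⟨s0⟩ := (inferInstance : Nonempty S)
    exact lt_of_le_of_lt (Finset.inf'_le _ (Finset.mem_univ s0)) (hc1 s0)
  have hz1pos : 0 < m/4 := by positivity
  have hsmall : ∀ s, qz (m/4) s ≤ 1/2 := by
    intro s
    by_contra hcon
    push_neg at hcon
    have hqs := hmem (m/4) hz1pos s
    have hquads := hquad (m/4) hz1pos s
    have hms : m ≤ c s := Finset.inf'_le _ (Finset.mem_univ s)
    nlinarith [hquads, mul_le_mul_of_nonneg_right hms (sq_nonneg (qz (m/4) s)),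
      mul_pos hm0 (show (0:ℝ) < (qz (m/4) s)^2 - 1/4 by nlinarith [hqs.1]),
      mul_pos hm0 (sub_pos.mpr hcon)]
  have hgz1 : 1 < g (m/4) := by
    have hterm3 : ∀ s, 1/3 < psiFn (qz (m/4) s) :=
      fun s => psi_gt_third (hmem _ hz1pos s) (hsmall s)
    have hsum3 : ∑ s, (p s:ℝ) * (1/3) < g (m/4) := by
      simp only [hg]
      exact Finset.sum_lt_sum_of_nonempty Finset.univ_nonempty
        (fun s _ => mul_lt_mul_of_pos_left (hterm3 s) (hply s))
    have : ∑ s, (p s:ℝ) * (1/3) = P * (1/3) := by rw [← Finset.sum_mul, hPsum]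
    linarith [hsum3, this.le, this.ge]
  -- big z
  set z2 : ℝ := 64 * P^2 with hz2
  have hz2pos : 0 < z2 := by positivity
  have hz2ge : (576:ℝ) ≤ z2 := by nlinarith [hP3]
  have hbig : ∀ s, psiFn (qz z2 s) < 1/P := by
    intro s
    have hqs := hmem z2 hz2pos s
    have hquads := hquad z2 hz2pos s
    have hhalf : 1/2 ≤ qz z2 s := by
      by_contra hcon
      push_neg at hcon
      have hq2 : (qz z2 s)^2 < 1/4 := by nlinarith [hqs.1]
      have h288 : (288:ℝ) < z2 * (1 - qz z2 s) := by
        nlinarith [mul_nonneg (show (0:ℝ) ≤ z2 - 576 by linarith)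
          (show (0:ℝ) ≤ 1 - qz z2 s - 1/2 by linarith)]
      have hlt1 : c s * (qz z2 s)^2 < 1/4 := by
        nlinarith [mul_nonneg (sub_nonneg.mpr (hc1 s).le) (sq_nonneg (qz z2 s)), hq2, hc0 s]
      linarith [hquads, h288, hlt1]
    have ht : 1 - qz z2 s < 1/z2 := by
      rw [lt_div_iff₀ hz2pos]
      have hq1sq : (qz z2 s)^2 < 1 := by nlinarith [hqs.1, hqs.2]
      have hcq : c s * (qz z2 s)^2 < 1 := by
        nlinarith [mul_pos (hc0 s) (sub_pos.mpr hq1sq), hc1 s]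
      nlinarith [hquads, hcq]
    have hsqrt : Real.sqrt (1 - qz z2 s) < 1/(8*P) := by
      apply (Real.sqrt_lt' (by positivity)).mpr
      have e : (1/(8*P))^2 = 1/z2 := by rw [hz2]; field_simp; ring
      rw [e]
      exact ht
    calc psiFn (qz z2 s) < 8 * Real.sqrt (1 - qz z2 s) := psi_ub hqs hhalf
    _ < 8 * (1/(8*P)) := by linarith [hsqrt]
    _ = 1/P := by field_simp
  have hgz2 : g z2 < 1 := by
    have hsum2 : g z2 < ∑ s, (p s:ℝ) * (1/P) := by
      simp only [hg]
      exact Finset.sum_lt_sum_of_nonempty Finset.univ_nonempty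
        (fun s _ => mul_lt_mul_of_pos_left (hbig s) (hply s))
    have e : ∑ s, (p s:ℝ) * (1/P) = P * (1/P) := by rw [← Finset.sum_mul, hPsum]
    have e2 : P * (1/P) = 1 := by field_simp
    linarith [hsum2, e.le, e.ge, e2.le, e2.ge]
  -- continuity and IVT
  set gQ : ℝ → ℝ := fun z => ∑ s, (p s:ℝ) * psiFn (Qf (c s) z) with hgQ
  have hgeq : ∀ z, 0 < z → g z = gQ z := by
    intro z hz
    simp only [hg, hgQ]
    exact Finset.sum_congr rfl (fun s _ => by rw [hQeq z hz s])
  have hle : m/4 ≤ z2 := by linarith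
  have hcont : ContinuousOn gQ (Set.Icc (m/4) z2) := by
    intro z0 hz0
    have hz0pos : 0 < z0 := lt_of_lt_of_le hz1pos hz0.1
    apply ContinuousAt.continuousWithinAt
    apply tendsto_finset_sum
    intro s _
    apply ContinuousAt.mul continuousAt_const
    have hmemQ : Qf (c s) z0 ∈ Set.Ioo (0:ℝ) 1 := by
      rw [← hQeq z0 hz0pos s]; exact hmem z0 hz0pos s
    exact (psi_contAt hmemQ).comp ((Qf_cont (hc0 s)).continuousAt)
  have hmem1 : (1:ℝ) ∈ Set.Icc (gQ z2) (gQ (m/4)) := by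
    constructor
    · rw [← hgeq z2 hz2pos]; exact hgz2.le
    · rw [← hgeq (m/4) hz1pos]; exact hgz1.le
  obtain ⟨z, hzmem, hgzval⟩ := intermediate_value_Icc' hle hcont hmem1
  have hzpos : 0 < z := lt_of_lt_of_le hz1pos hzmem.1
  have hgz1' : g z = 1 := by rw [hgeq z hzpos]; exact hgzval
  refine ⟨z, ⟨hzpos, (hiff z hzpos).mpr hgz1'⟩, ?_⟩
  intro y hy
  have hgy : g y = 1 := (hiff y hy.1).mp hy.2
  by_contra hne
  rcases lt_or_gt_of_ne hne with hlt | hgt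
  · have := hganti y z hy.1 hlt
    rw [hgy, hgz1'] at this
    exact lt_irrefl 1 this
  · have := hganti z y hzpos hgt
    rw [hgy, hgz1'] at this
    exact lt_irrefl 1 this
end

section
/- If ∑_{s∈S} p(s) ≥ 3, then the system of equations (λ(s)/p(s))·q(s)²/(1−q(s)) = Φ(q) for all s ∈ S has exactly one solution q ∈ (0,1)^S. -/
open Real Set

noncomputable section EOS2024

namespace EOS2024

/-- The basic function `q ↦ a q² / (1-q)`. -/
def fq (a q : ℝ) : ℝ := a * q ^ 2 / (1 - q)

lemma fq_strictMonoOn {a : ℝ} (ha : 0 < a) : StrictMonoOn (fq a) (Ico 0 1) := by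
  intro x hx y hy hxy
  have hx1 : (0:ℝ) < 1 - x := by linarith [hx.2]
  have hy1 : (0:ℝ) < 1 - y := by linarith [hy.2]
  rw [fq, fq, div_lt_div_iff₀ hx1 hy1]
  have hy0 : 0 < y := lt_of_le_of_lt hx.1 hxy
  have hx2 : x ^ 2 < y ^ 2 := by nlinarith [hx.1]
  have k1 : a * y ^ 2 * (1 - y) < a * y ^ 2 * (1 - x) :=
    mul_lt_mul_of_pos_left (by linarith) (by positivity)
  have k2 : a * x ^ 2 * (1 - y) ≤ a * y ^ 2 * (1 - y) :=
    mul_le_mul_of_nonneg_right (mul_le_mul_of_nonneg_left hx2.le ha.le) hy1.le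
  linarith

lemma fq_nonneg {a q : ℝ} (ha : 0 < a) (hq : q ∈ Ico (0:ℝ) 1) : 0 ≤ fq a q := by
  have : (0:ℝ) < 1 - q := by linarith [hq.2]
  exact div_nonneg (by positivity) this.le

lemma fq_exun {a c : ℝ} (ha : 0 < a) (hc : 0 ≤ c) :
    ∃! q, q ∈ Ico (0:ℝ) 1 ∧ fq a q = c := by
  have key : ∃ q ∈ Ico (0:ℝ) 1, fq a q = c := by
    set ε : ℝ := min (1/2) (a / (4 * (c+1))) with hε
    have hεpos : 0 < ε := lt_min (by norm_num) (by positivity)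
    have hεle : ε ≤ 1/2 := min_le_left _ _
    have ht1 : (0:ℝ) ≤ 1 - ε := by linarith
    have hft : c ≤ fq a (1 - ε) := by
      have h2 : (1/4:ℝ) ≤ (1-ε)^2 := by nlinarith
      have h3 : ε * (4*(c+1)) ≤ a := by
        have h3' : ε ≤ a / (4*(c+1)) := min_le_right _ _
        exact (le_div_iff₀ (by positivity)).1 h3'
      rw [fq, show (1:ℝ)-(1-ε) = ε from by ring, le_div_iff₀ hεpos]
      nlinarith [mul_le_mul_of_nonneg_left h2 ha.le]
    have hcont : ContinuousOn (fq a) (Icc 0 (1-ε)) := by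
      apply ContinuousOn.div (by fun_prop) (by fun_prop)
      intro q hq
      have : q ≤ 1 - ε := hq.2
      intro h; nlinarith
    have := intermediate_value_Icc ht1 hcont
    have hc' : c ∈ Icc (fq a 0) (fq a (1-ε)) := by
      constructor
      · simpa [fq] using hc
      · exact hft
    obtain ⟨q, hq, hfq⟩ := this hc'
    exact ⟨q, ⟨hq.1, lt_of_le_of_lt hq.2 (by linarith)⟩, hfq⟩
  obtain ⟨q, hq, hfq⟩ := key
  refine ⟨q, ⟨hq, hfq⟩, ?_⟩
  rintro q' ⟨hq', hfq'⟩
  exact (fq_strictMonoOn ha).injOn hq' hq (by rw [hfq, hfq'])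

/-- The inverse function: `Q a c` is the unique `q ∈ [0,1)` with `a q²/(1-q) = c`. -/
def Q (a c : ℝ) : ℝ := if h : 0 < a ∧ 0 ≤ c then (fq_exun h.1 h.2).exists.choose else 0

lemma Q_spec {a c : ℝ} (ha : 0 < a) (hc : 0 ≤ c) :
    Q a c ∈ Ico (0:ℝ) 1 ∧ fq a (Q a c) = c := by
  rw [Q, dif_pos ⟨ha, hc⟩]
  exact (fq_exun ha hc).exists.choose_spec

lemma Q_eq {a c q : ℝ} (ha : 0 < a) (hc : 0 ≤ c) (hq : q ∈ Ico (0:ℝ) 1)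
    (h : fq a q = c) : Q a c = q := by
  obtain ⟨h1, h2⟩ := Q_spec ha hc
  exact ((fq_exun ha hc).unique ⟨h1, h2⟩ ⟨hq, h⟩)

lemma Q_zero {a : ℝ} (ha : 0 < a) : Q a 0 = 0 :=
  Q_eq ha le_rfl ⟨le_rfl, one_pos⟩ (by simp [fq])

lemma Q_mem {a c : ℝ} (ha : 0 < a) (hc : 0 ≤ c) : Q a c ∈ Ico (0:ℝ) 1 := (Q_spec ha hc).1

lemma Q_pos {a c : ℝ} (ha : 0 < a) (hc : 0 < c) : 0 < Q a c := by
  rcases lt_or_eq_of_le (Q_mem ha hc.le).1 with h | h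
  · exact h
  · exfalso
    have := (Q_spec ha hc.le).2
    rw [← h] at this
    simp [fq] at this
    linarith

lemma Q_strictMonoOn {a : ℝ} (ha : 0 < a) : StrictMonoOn (Q a) (Ici 0) := by
  intro x hx y hy hxy
  by_contra h
  push_neg at h
  have := (fq_strictMonoOn ha).monotoneOn (Q_mem ha hy) (Q_mem ha hx) h
  rw [(Q_spec ha hx).2, (Q_spec ha hy).2] at this
  linarith

lemma Q_monotoneOn {a : ℝ} (ha : 0 < a) : MonotoneOn (Q a) (Ici 0) :=
  (Q_strictMonoOn ha).monotoneOn

lemma Q_image {a : ℝ} (ha : 0 < a) : Q a '' (Ici 0) = Ico (0:ℝ) 1 := by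
  apply Subset.antisymm
  · rintro _ ⟨c, hc, rfl⟩
    exact Q_mem ha hc
  · intro q hq
    exact ⟨fq a q, fq_nonneg ha hq, Q_eq ha (fq_nonneg ha hq) hq rfl⟩

lemma Q_continuousOn {a : ℝ} (ha : 0 < a) : ContinuousOn (Q a) (Ici 0) := by
  intro c hc
  rcases eq_or_lt_of_le (mem_Ici.1 hc) with h | h
  · subst h
    have h1 : Ici (0:ℝ) ∈ nhdsWithin (0:ℝ) (Ici 0) := self_mem_nhdsWithin
    have h2 : Q a '' (Ici 0) ∈ nhdsWithin (Q a 0) (Ici (Q a 0)) := by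
      rw [Q_image ha, Q_zero ha]
      rw [show Ico (0:ℝ) 1 = Ici 0 ∩ Iio 1 from rfl]
      exact inter_mem_nhdsWithin _ (Iio_mem_nhds one_pos)
    have := continuousWithinAt_right_of_monotoneOn_of_image_mem_nhdsWithin
      (Q_monotoneOn ha) h1 h2
    exact this
  · apply ContinuousAt.continuousWithinAt
    apply continuousAt_of_monotoneOn_of_image_mem_nhds (Q_monotoneOn ha) (Ici_mem_nhds h)
    rw [Q_image ha]
    exact Ico_mem_nhds (Q_pos ha h) (Q_mem ha hc).2


lemma fq_hasDerivAt {a q : ℝ} (hq : q ≠ 1) :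
    HasDerivAt (fq a) (a * q * (2 - q) / (1 - q) ^ 2) q := by
  have h1 : (1:ℝ) - q ≠ 0 := sub_ne_zero.2 (Ne.symm hq)
  have hu : HasDerivAt (fun x : ℝ => a * x ^ 2) (a * (2 * q)) q := by
    simpa using ((hasDerivAt_pow 2 q).const_mul a)
  have hv : HasDerivAt (fun x : ℝ => 1 - x) (-1) q := by
    simpa using ((hasDerivAt_id q).const_sub 1)
  have := hu.div hv h1
  refine this.congr_deriv ?_
  field_simp
  ring

lemma Q_hasDerivAt {a c : ℝ} (ha : 0 < a) (hc : 0 < c) :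
    HasDerivAt (Q a) ((1 - Q a c) ^ 2 / (a * Q a c * (2 - Q a c))) c := by
  set q := Q a c with hqdef
  have hq := Q_mem ha hc.le
  have hq0 : 0 < q := Q_pos ha hc
  have hq1 : q < 1 := hq.2
  have hcont : ContinuousAt (Q a) c :=
    (Q_continuousOn ha c (le_of_lt hc)).continuousAt (Ici_mem_nhds hc)
  have hf : HasDerivAt (fq a) (a * q * (2 - q) / (1 - q) ^ 2) (Q a c) :=
    fq_hasDerivAt (ne_of_lt hq1)
  have hf' : a * q * (2 - q) / (1 - q) ^ 2 ≠ 0 := by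
    have h1 : (0:ℝ) < 1 - q := by linarith
    have : 0 < a * q * (2 - q) / (1 - q) ^ 2 := by
      apply div_pos (mul_pos (mul_pos ha hq0) (by linarith)) (by positivity)
    exact ne_of_gt this
  have hfg : ∀ᶠ y in nhds c, fq a (Q a y) = y := by
    filter_upwards [Ioi_mem_nhds hc] with y hy
    exact (Q_spec ha (le_of_lt hy)).2
  have := hf.of_local_left_inverse hcont hf' hfg
  refine this.congr_deriv ?_
  rw [inv_div]

/-- The elementary inequality `log (1-q) < -q - q²/2` for `q ∈ (0,1)`. -/
lemma log_one_sub_lt {q : ℝ} (hq0 : 0 < q) (hq1 : q < 1) :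
    Real.log (1 - q) < -q - q ^ 2 / 2 := by
  set g : ℝ → ℝ := fun x => Real.log (1 - x) + x + x ^ 2 / 2 with hg
  have hderiv : ∀ x ∈ Ioo (0:ℝ) 1, HasDerivAt g (-(x ^ 2) / (1 - x)) x := by
    intro x hx
    have h1 : (1:ℝ) - x ≠ 0 := by intro h; simp at hx; linarith [hx.2]
    have hlog : HasDerivAt (fun y : ℝ => Real.log (1 - y)) (-1 / (1 - x)) x := by
      have hv : HasDerivAt (fun y : ℝ => 1 - y) (-1) x := by
        simpa using ((hasDerivAt_id x).const_sub 1)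
      simpa using hv.log h1
    have := (hlog.add (hasDerivAt_id x)).add
      (by simpa using ((hasDerivAt_pow 2 x).div_const 2) : HasDerivAt (fun y : ℝ => y ^ 2 / 2) x x)
    refine this.congr_deriv ?_
    field_simp
    ring
  have hcont : ContinuousOn g (Icc 0 q) := by
    apply ContinuousOn.add (ContinuousOn.add ?_ (by fun_prop)) (by fun_prop)
    apply ContinuousOn.log (by fun_prop)
    intro x hx
    have := hx.2
    intro h; linarith
  have hanti : StrictAntiOn g (Icc 0 q) := by
    apply strictAntiOn_of_deriv_neg (convex_Icc 0 q) hcont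
    intro x hx
    rw [interior_Icc] at hx
    have hx' : x ∈ Ioo (0:ℝ) 1 := ⟨hx.1, lt_trans hx.2 hq1⟩
    rw [(hderiv x hx').deriv]
    apply div_neg_of_neg_of_pos
    · have : 0 < x ^ 2 := pow_pos hx'.1 2
      linarith
    · linarith [hx'.2]
  have := hanti (left_mem_Icc.2 hq0.le) (right_mem_Icc.2 hq0.le) hq0
  have hg0 : g 0 = 0 := by simp [hg]
  rw [hg0] at this
  simp only [hg] at this
  linarith


section Dfun

variable {S : Type*} [Fintype S] [Nonempty S] {lam : S → ℝ} {p : S → ℕ}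
set_option linter.unusedSectionVars false

/-- The key one-variable function whose zeros correspond to solutions. -/
def DD (lam : S → ℝ) (p : S → ℕ) (c : ℝ) : ℝ :=
  c + ∑ s, lam s * (Q (lam s / p s) c + Real.log (1 - Q (lam s / p s) c))

variable (hlam : ∀ s, lam s ∈ Set.Ioo (0:ℝ) 1) (hp : ∀ s, 1 ≤ p s)

include hlam hp

lemma ha_pos (s : S) : 0 < lam s / p s := by
  apply div_pos (hlam s).1
  exact_mod_cast Nat.lt_of_lt_of_le Nat.zero_lt_one (hp s)

lemma DD_hasDerivAt {c : ℝ} (hc : 0 < c) :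
    HasDerivAt (DD lam p)
      (1 - ∑ s, (p s : ℝ) * (1 - Q (lam s / p s) c) / (2 - Q (lam s / p s) c)) c := by
  have hterm : ∀ s : S,
      HasDerivAt (fun c => lam s * (Q (lam s / p s) c + Real.log (1 - Q (lam s / p s) c)))
        (-((p s : ℝ) * (1 - Q (lam s / p s) c) / (2 - Q (lam s / p s) c))) c := by
    intro s
    set a := lam s / p s with hadef
    have ha := ha_pos hlam hp s
    set q := Q a c with hqdef
    have hq0 : 0 < q := Q_pos ha hc
    have hq1 : q < 1 := (Q_mem ha hc.le).2
    have h1q : (1:ℝ) - q ≠ 0 := by intro h; linarith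
    set d := (1 - q) ^ 2 / (a * q * (2 - q)) with hddef
    have hQ : HasDerivAt (Q a) d c := Q_hasDerivAt ha hc
    have hin : HasDerivAt (fun c => 1 - Q a c) (-d) c := by
      simpa using hQ.const_sub 1
    have hlog : HasDerivAt (fun c => Real.log (1 - Q a c)) (-d / (1 - q)) c :=
      hin.log h1q
    have := ((hQ.add hlog).const_mul (lam s))
    refine this.congr_deriv ?_
    rw [hddef, hadef]
    have hps : (p s : ℝ) ≠ 0 := by
      have := hp s; positivity
    have hlamne : lam s ≠ 0 := ne_of_gt (hlam s).1
    have h2q : (2:ℝ) - q ≠ 0 := by intro h; linarith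
    field_simp
    ring
  have hsum : HasDerivAt
      (fun c => ∑ s, lam s * (Q (lam s / p s) c + Real.log (1 - Q (lam s / p s) c)))
      (∑ s, -((p s : ℝ) * (1 - Q (lam s / p s) c) / (2 - Q (lam s / p s) c))) c :=
    HasDerivAt.fun_sum (fun s _ => hterm s)
  have h := (hasDerivAt_id c).add hsum
  have : HasDerivAt (DD lam p)
      (1 + ∑ s, -((p s : ℝ) * (1 - Q (lam s / p s) c) / (2 - Q (lam s / p s) c))) c := h
  convert this using 1
  rw [Finset.sum_neg_distrib]
  ring

lemma DD_continuousOn : ContinuousOn (DD lam p) (Set.Ici 0) := by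
  apply ContinuousOn.add continuousOn_id
  apply continuousOn_finset_sum
  intro s _
  have ha := ha_pos hlam hp s
  apply ContinuousOn.mul continuousOn_const
  apply ContinuousOn.add (Q_continuousOn ha)
  apply ContinuousOn.log (continuousOn_const.sub (Q_continuousOn ha))
  intro c hc
  have := (Q_mem ha hc).2
  intro h; simp only [Pi.sub_apply] at h; linarith

lemma DD_deriv_strictMonoOn : StrictMonoOn (deriv (DD lam p)) (Set.Ioi 0) := by
  intro x hx y hy hxy
  rw [(DD_hasDerivAt hlam hp hx).deriv, (DD_hasDerivAt hlam hp hy).deriv]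
  have hsum : ∑ s, (p s : ℝ) * (1 - Q (lam s / p s) y) / (2 - Q (lam s / p s) y) <
      ∑ s, (p s : ℝ) * (1 - Q (lam s / p s) x) / (2 - Q (lam s / p s) x) := by
    apply Finset.sum_lt_sum_of_nonempty Finset.univ_nonempty
    intro s _
    have ha := ha_pos hlam hp s
    have hq := Q_strictMonoOn ha (mem_Ici.2 (le_of_lt hx)) (mem_Ici.2 (le_of_lt (lt_trans hx hxy))) hxy
    set q1 := Q (lam s / p s) x
    set q2 := Q (lam s / p s) y
    have hq1 : q1 ∈ Set.Ico (0:ℝ) 1 := Q_mem ha hx.le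
    have hq2 : q2 ∈ Set.Ico (0:ℝ) 1 := Q_mem ha (lt_trans hx hxy).le
    have h21 : (0:ℝ) < 2 - q1 := by linarith [hq1.2]
    have h22 : (0:ℝ) < 2 - q2 := by linarith [hq2.2]
    have hpp : (0:ℝ) < (p s : ℝ) := by exact_mod_cast Nat.lt_of_lt_of_le Nat.zero_lt_one (hp s)
    rw [div_lt_div_iff₀ h22 h21]
    nlinarith
  linarith

lemma DD_strictConvexOn : StrictConvexOn ℝ (Set.Ici 0) (DD lam p) := by
  apply StrictMonoOn.strictConvexOn_of_deriv (convex_Ici 0) (DD_continuousOn hlam hp)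
  rw [interior_Ici]
  exact DD_deriv_strictMonoOn hlam hp

lemma DD_zero : DD lam p 0 = 0 := by
  rw [DD]
  have : ∀ s : S, lam s * (Q (lam s / p s) 0 + Real.log (1 - Q (lam s / p s) 0)) = 0 := by
    intro s
    rw [Q_zero (ha_pos hlam hp s)]
    simp
  rw [Finset.sum_congr rfl (fun s _ => this s)]
  simp


lemma lam_q_sq (s : S) {c : ℝ} (hc : 0 ≤ c) :
    lam s * (Q (lam s / p s) c) ^ 2 = c * p s * (1 - Q (lam s / p s) c) := by
  have ha := ha_pos hlam hp s
  have hspec := (Q_spec ha hc).2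
  have hq := Q_mem ha hc
  have h1q : (0:ℝ) < 1 - Q (lam s / p s) c := by linarith [hq.2]
  have hps : (p s : ℝ) ≠ 0 := by have := hp s; positivity
  rw [fq, div_eq_iff (ne_of_gt h1q)] at hspec
  field_simp at hspec ⊢
  linarith

lemma exists_DD_neg (hP : 3 ≤ ∑ s, p s) : ∃ c, 0 < c ∧ DD lam p c < 0 := by
  set m := Finset.univ.inf' Finset.univ_nonempty (fun s => lam s / p s) with hm
  have hm0 : 0 < m := by
    rw [hm, Finset.lt_inf'_iff]
    exact fun s _ => ha_pos hlam hp s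
  set c := m / 12 with hcdef
  have hc0 : 0 < c := by positivity
  refine ⟨c, hc0, ?_⟩
  have hqsmall : ∀ s : S, Q (lam s / p s) c < 1/3 := by
    intro s
    have ha := ha_pos hlam hp s
    by_contra h
    push_neg at h
    have hmem : (1/3 : ℝ) ∈ Set.Ico (0:ℝ) 1 := by norm_num
    have hmono := (fq_strictMonoOn ha).monotoneOn hmem (Q_mem ha hc0.le) h
    rw [(Q_spec ha hc0.le).2] at hmono
    have hfq3 : fq (lam s / p s) (1/3) = (lam s / p s) / 6 := by
      rw [fq]; ring
    rw [hfq3] at hmono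
    have hma : m ≤ lam s / p s := Finset.inf'_le _ (Finset.mem_univ s)
    rw [hcdef] at hmono
    linarith
  have hterm : ∀ s : S,
      lam s * (Q (lam s / p s) c + Real.log (1 - Q (lam s / p s) c)) < -(c * p s) / 3 := by
    intro s
    have ha := ha_pos hlam hp s
    set q := Q (lam s / p s) c with hq
    have hq0 : 0 < q := Q_pos ha hc0
    have hq1 : q < 1/3 := hqsmall s
    have hlog := log_one_sub_lt hq0 (by linarith)
    have hlams : 0 < lam s := (hlam s).1
    have h1 : lam s * (q + Real.log (1 - q)) < -(lam s * q ^ 2) / 2 := by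
      have := mul_lt_mul_of_pos_left (by linarith : q + Real.log (1-q) < -(q^2)/2) hlams
      linarith [this]
    have h2 : lam s * q ^ 2 = c * p s * (1 - q) := lam_q_sq hlam hp s hc0.le
    have hps : (1:ℝ) ≤ (p s : ℝ) := by exact_mod_cast hp s
    have h3 : c * p s * (2/3) ≤ c * p s * (1 - q) := by
      apply mul_le_mul_of_nonneg_left (by linarith) (by positivity)
    calc lam s * (q + Real.log (1 - q)) < -(lam s * q ^ 2) / 2 := h1
      _ = -(c * p s * (1 - q)) / 2 := by rw [h2]
      _ ≤ -(c * p s * (2/3)) / 2 := by linarith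
      _ = -(c * p s) / 3 := by ring
  have hsum : ∑ s, lam s * (Q (lam s / p s) c + Real.log (1 - Q (lam s / p s) c)) <
      ∑ s, -(c * p s) / 3 :=
    Finset.sum_lt_sum_of_nonempty Finset.univ_nonempty (fun s _ => hterm s)
  have hsum2 : ∑ s, -(c * (p s : ℝ)) / 3 ≤ -c := by
    have hcast : (3:ℝ) ≤ ∑ s, (p s : ℝ) := by exact_mod_cast hP
    have : ∑ s, -(c * (p s : ℝ)) / 3 = -(c/3) * ∑ s, (p s : ℝ) := by
      rw [Finset.mul_sum]
      apply Finset.sum_congr rfl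
      intro s _; ring
    rw [this]
    nlinarith
  rw [DD]
  linarith

lemma exists_DD_pos : ∃ c, 0 < c ∧ 0 < DD lam p c := by
  set L := ∑ s, lam s with hL
  set K := ∑ s, lam s * Real.log ((lam s / p s)/4) with hK
  have hL0 : 0 < L := Finset.sum_pos (fun s _ => (hlam s).1) Finset.univ_nonempty
  set B := 2*L + |K| + 1 with hB
  have hB1 : 1 ≤ B := by linarith [abs_nonneg K]
  set c := B^2 with hc
  have hc1 : 1 ≤ c := by nlinarith
  have hc0 : 0 < c := by linarith
  clear_value L K B c
  refine ⟨c, hc0, ?_⟩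
  have hqbig : ∀ s : S, 1/2 ≤ Q (lam s / p s) c := by
    intro s
    have ha := ha_pos hlam hp s
    have ha1 : lam s / p s < 1 := by
      have hps : (1:ℝ) ≤ (p s : ℝ) := by exact_mod_cast hp s
      have := (hlam s).2
      rw [div_lt_one (by linarith)]
      linarith
    by_contra h
    push_neg at h
    have hmem : (1/2 : ℝ) ∈ Set.Ico (0:ℝ) 1 := by norm_num
    have := fq_strictMonoOn ha (Q_mem ha hc0.le) hmem h
    rw [(Q_spec ha hc0.le).2] at this
    have hfq2 : fq (lam s / p s) (1/2) = (lam s / p s) / 2 := by rw [fq]; ring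
    rw [hfq2] at this
    linarith
  have hterm : ∀ s : S,
      lam s * (Real.log ((lam s / p s)/4) - Real.log c) ≤
      lam s * (Q (lam s / p s) c + Real.log (1 - Q (lam s / p s) c)) := by
    intro s
    have ha := ha_pos hlam hp s
    have hspec2 := lam_q_sq hlam hp s hc0.le
    have hqmem := Q_mem ha hc0.le
    have hq2 : 1/2 ≤ Q (lam s / p s) c := hqbig s
    set q := Q (lam s / p s) c with hqd
    have h1q : (0:ℝ) < 1 - q := by linarith [hqmem.2]
    have hlams : 0 < lam s := (hlam s).1
    have hps : (1:ℝ) ≤ (p s : ℝ) := by exact_mod_cast hp s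
    have hps0 : (0:ℝ) < (p s : ℝ) := by positivity
    have h1qeq : 1 - q = lam s * q ^ 2 / (c * p s) := by
      rw [eq_div_iff (by positivity)]
      linear_combination -hspec2
    have hlb : (lam s / p s)/4/c ≤ 1 - q := by
      rw [h1qeq, show (lam s / p s)/4/c = (lam s / 4)/(c * p s) from by ring]
      gcongr
      have hq4 : (1/4:ℝ) ≤ q^2 := by nlinarith
      nlinarith [mul_le_mul_of_nonneg_left hq4 hlams.le]
    have hlog : Real.log ((lam s / p s)/4/c) ≤ Real.log (1 - q) :=
      Real.log_le_log (by positivity) hlb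
    rw [Real.log_div (by positivity) (ne_of_gt hc0)] at hlog
    apply mul_le_mul_of_nonneg_left ?_ hlams.le
    linarith [hqmem.1]
  have hsum : K - Real.log c * L ≤
      ∑ s, lam s * (Q (lam s / p s) c + Real.log (1 - Q (lam s / p s) c)) := by
    have h1 : ∑ s, lam s * (Real.log ((lam s / p s)/4) - Real.log c) = K - Real.log c * L := by
      rw [hK, hL, Finset.mul_sum, ← Finset.sum_sub_distrib]
      apply Finset.sum_congr rfl
      intro s _; ring
    rw [← h1]
    exact Finset.sum_le_sum (fun s _ => hterm s)
  have hlogc : Real.log c ≤ 2 * (B - 1) := by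
    rw [hc, show B^2 = B * B from sq B, Real.log_mul (by linarith) (by linarith)]
    have := Real.log_le_sub_one_of_pos (by linarith : (0:ℝ) < B)
    linarith
  rw [DD]
  have habs1 : K ≤ |K| := le_abs_self K
  have habs2 : -|K| ≤ K := neg_abs_le K
  have hfin : 0 < c + (K - Real.log c * L) := by
    have h2 : Real.log c * L ≤ 2 * (B - 1) * L :=
      mul_le_mul_of_nonneg_right hlogc hL0.le
    have h3 : (1:ℝ) * (|K|+1) ≤ B * (|K|+1) :=
      mul_le_mul_of_nonneg_right hB1 (by positivity)
    have h4 : B^2 - 2*B*L = B*(|K|+1) := by rw [hB]; ring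
    linarith [h2, h3, h4, habs2, hL0]
  linarith

lemma DD_split {c : ℝ} (hc : 0 < c) :
    DD lam p c = c * (1 + ∑ s, (p s : ℝ) * (1 - Q (lam s / p s) c) / Q (lam s / p s) c)
      - (-∑ s, lam s * Real.log (1 - Q (lam s / p s) c)) := by
  rw [DD, mul_add, mul_one, Finset.mul_sum, sub_neg_eq_add]
  have hterm : ∀ s : S,
      lam s * (Q (lam s / p s) c + Real.log (1 - Q (lam s / p s) c)) =
      c * ((p s : ℝ) * (1 - Q (lam s / p s) c) / Q (lam s / p s) c) +
        lam s * Real.log (1 - Q (lam s / p s) c) := by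
    intro s
    have hq0 : 0 < Q (lam s / p s) c := Q_pos (ha_pos hlam hp s) hc
    have h := lam_q_sq hlam hp s hc.le
    have key : c * ((p s : ℝ) * (1 - Q (lam s / p s) c) / Q (lam s / p s) c) =
        lam s * Q (lam s / p s) c := by
      rw [show c * ((p s : ℝ) * (1 - Q (lam s / p s) c) / Q (lam s / p s) c)
          = c * ((p s : ℝ) * (1 - Q (lam s / p s) c)) / Q (lam s / p s) c from by ring,
        div_eq_iff (ne_of_gt hq0)]
      linear_combination -h
    rw [key]
    ring
  rw [Finset.sum_congr rfl (fun s _ => hterm s), Finset.sum_add_distrib]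
  ring

lemma DD_exun (hP : 3 ≤ ∑ s, p s) : ∃! c, 0 < c ∧ DD lam p c = 0 := by
  obtain ⟨c1, hc1, hneg⟩ := exists_DD_neg hlam hp hP
  obtain ⟨c2, hc2, hpos⟩ := exists_DD_pos hlam hp
  have hconv := DD_strictConvexOn hlam hp
  have hchord : ∀ x y : ℝ, 0 < x → x < y → DD lam p y ≤ 0 → DD lam p x < 0 := by
    intro x y hx hxy hy
    have hy0 : 0 < y := lt_trans hx hxy
    have h1 : (0:ℝ) < x/y := by positivity
    have h2 : x/y < 1 := (div_lt_one hy0).2 hxy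
    have hkey := hconv.2 (Set.self_mem_Ici) (Set.mem_Ici.2 hy0.le) (ne_of_lt hy0)
      (by linarith : (0:ℝ) < 1 - x/y) h1 (by ring)
    have hxy' : (x/y) * y = x := by field_simp
    rw [smul_eq_mul, smul_eq_mul, smul_eq_mul, mul_zero, zero_add, hxy',
      DD_zero hlam hp, mul_zero, zero_add] at hkey
    rw [smul_eq_mul] at hkey
    nlinarith [h1.le, hy, hkey]
  have hc12 : c1 < c2 := by
    rcases lt_trichotomy c1 c2 with h | h | h
    · exact h
    · exfalso; rw [h] at hneg; linarith
    · exfalso; exact absurd (hchord c2 c1 hc2 h hneg.le) (by linarith)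
  obtain ⟨c0, hc0mem, hc0eq⟩ := intermediate_value_Icc hc12.le
    ((DD_continuousOn hlam hp).mono (Set.Icc_subset_Ici_iff hc12.le |>.2 hc1.le))
    ⟨hneg.le, hpos.le⟩
  have hc00 : 0 < c0 := lt_of_lt_of_le hc1 hc0mem.1
  refine ⟨c0, ⟨hc00, hc0eq⟩, ?_⟩
  rintro z ⟨hz, hzeq⟩
  rcases lt_trichotomy z c0 with h | h | h
  · exact absurd (hchord z c0 hz h hc0eq.le) (by rw [hzeq]; exact lt_irrefl 0)
  · exact h
  · exact absurd (hchord c0 z hc00 h hzeq.le) (by rw [hc0eq]; exact lt_irrefl 0)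

end Dfun

end EOS2024

/-- If ∑ p(s) ≥ 3, then the system of equations (λ(s)/p(s))·q(s)²/(1−q(s)) = Φ(q)
for all s ∈ S has exactly one solution q ∈ (0,1)^S, where
Φ(q) = (−∑ λ(t)·log(1−q(t))) / (1 + ∑ p(t)·(1−q(t))/q(t)). -/
theorem exactly_one_solution
    {S : Type*} [Fintype S] [Nonempty S]
    (lam : S → ℝ) (p : S → ℕ)
    (hlam : ∀ s, lam s ∈ Set.Ioo (0:ℝ) 1) (hp : ∀ s, 1 ≤ p s)
    (hP : 3 ≤ ∑ s, p s) :
    ∃! q : S → ℝ, (∀ s, q s ∈ Set.Ioo (0:ℝ) 1) ∧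
      ∀ s, lam s / (p s : ℝ) * (q s) ^ 2 / (1 - q s) =
        (-∑ t, lam t * Real.log (1 - q t)) /
          (1 + ∑ t, (p t : ℝ) * (1 - q t) / q t) := by
  have ha : ∀ s : S, 0 < lam s / (p s : ℝ) := EOS2024.ha_pos hlam hp
  obtain ⟨c0, ⟨hc00, hDc0⟩, huniq⟩ := EOS2024.DD_exun hlam hp hP
  set q0 : S → ℝ := fun s => EOS2024.Q (lam s / p s) c0 with hq0def
  have hq0mem : ∀ s, q0 s ∈ Set.Ioo (0:ℝ) 1 := fun s =>
    ⟨EOS2024.Q_pos (ha s) hc00, (EOS2024.Q_mem (ha s) hc00.le).2⟩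
  have hU0 : 0 < 1 + ∑ t, (p t : ℝ) * (1 - q0 t) / q0 t := by
    have : ∀ t : S, 0 ≤ (p t : ℝ) * (1 - q0 t) / q0 t := by
      intro t
      have h1 := hq0mem t
      apply div_nonneg (mul_nonneg (by positivity) (by linarith [h1.2])) (le_of_lt h1.1)
    have h2 : (0:ℝ) ≤ ∑ t, (p t : ℝ) * (1 - q0 t) / q0 t :=
      Finset.sum_nonneg (fun t _ => this t)
    linarith
  have hsplit0 := EOS2024.DD_split hlam hp hc00
  rw [hDc0] at hsplit0
  have hPhi0 : (-∑ t, lam t * Real.log (1 - q0 t)) /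
      (1 + ∑ t, (p t : ℝ) * (1 - q0 t) / q0 t) = c0 := by
    rw [div_eq_iff (ne_of_gt hU0)]
    rw [hq0def]
    linarith [hsplit0]
  refine ⟨q0, ⟨hq0mem, ?_⟩, ?_⟩
  · intro s
    rw [hPhi0]
    exact (EOS2024.Q_spec (ha s) hc00.le).2
  · rintro q ⟨hqmem, hsol⟩
    have hV : 0 < -∑ t, lam t * Real.log (1 - q t) := by
      have hterm : ∀ t : S, lam t * Real.log (1 - q t) < 0 := by
        intro t
        have h1 := hqmem t
        apply mul_neg_of_pos_of_neg (hlam t).1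
        apply Real.log_neg (by linarith [h1.2]) (by linarith [h1.1])
      have := Finset.sum_neg (fun t _ => hterm t) Finset.univ_nonempty
      linarith
    have hU : 0 < 1 + ∑ t, (p t : ℝ) * (1 - q t) / q t := by
      have : ∀ t : S, 0 ≤ (p t : ℝ) * (1 - q t) / q t := by
        intro t
        have h1 := hqmem t
        apply div_nonneg (mul_nonneg (by positivity) (by linarith [h1.2])) (le_of_lt h1.1)
      have h2 : (0:ℝ) ≤ ∑ t, (p t : ℝ) * (1 - q t) / q t :=
        Finset.sum_nonneg (fun t _ => this t)
      linarith
    set c : ℝ := (-∑ t, lam t * Real.log (1 - q t)) /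
      (1 + ∑ t, (p t : ℝ) * (1 - q t) / q t) with hcdef
    have hc : 0 < c := div_pos hV hU
    have hQeq : ∀ s, EOS2024.Q (lam s / p s) c = q s := by
      intro s
      exact EOS2024.Q_eq (ha s) hc.le ⟨(hqmem s).1.le, (hqmem s).2⟩
        (by simpa [EOS2024.fq] using hsol s)
    have hsplit := EOS2024.DD_split hlam hp hc
    simp only [hQeq] at hsplit
    have hDc : EOS2024.DD lam p c = 0 := by
      rw [hsplit, hcdef, div_mul_cancel₀ _ (ne_of_gt hU)]
      ring
    have hcc0 : c = c0 := huniq c ⟨hc, hDc⟩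
    funext s
    rw [hq0def]
    rw [← hQeq s, hcc0]
end EOS2024
end

section
/- The function g(z) = z + ∑_{t∈S} λ(t)·q_z(t) + ∑_{t∈S} λ(t)·log(1−q_z(t)) (extended to z = 0 by q_0 = 0, so g(0) = 0) is strictly convex on [0,∞), and for every z > 0 its derivative equals g'(z) = 1 − ∑_{t∈S} p(t)·(1−q_z(t))/(2−q_z(t)). -/
/-- The function g(z) = z + ∑ λ(t)·q_z(t) + ∑ λ(t)·log(1−q_z(t)) (extended to z = 0
by q_0 = 0, so g(0) = 0) is strictly convex on [0,∞), and for every z > 0 its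
derivative equals 1 − ∑ p(t)·(1−q_z(t))/(2−q_z(t)); here, for z > 0, q_z(s) is the
unique x ∈ (0,1) with (λ(s)/p(s))·x²/(1−x) = z. -/
theorem g_strictConvex_and_deriv
    {S : Type*} [Fintype S] [Nonempty S]
    (lam : S → ℝ) (p : S → ℕ)
    (hlam : ∀ s, lam s ∈ Set.Ioo (0:ℝ) 1) (hp : ∀ s, 1 ≤ p s)
    (qz : ℝ → S → ℝ)
    (hqz : ∀ z > (0:ℝ), ∀ s, qz z s ∈ Set.Ioo (0:ℝ) 1 ∧
      lam s / (p s : ℝ) * (qz z s) ^ 2 / (1 - qz z s) = z)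
    (hqz0 : ∀ s, qz 0 s = 0)
    (g : ℝ → ℝ)
    (hg : ∀ z, g z = z + ∑ t, lam t * qz z t + ∑ t, lam t * Real.log (1 - qz z t)) :
    StrictConvexOn ℝ (Set.Ici 0) g ∧
      ∀ z > (0:ℝ), HasDerivAt g
        (1 - ∑ t, (p t : ℝ) * (1 - qz z t) / (2 - qz z t)) z := by
  have hp0 : ∀ t, (0:ℝ) < (p t : ℝ) := fun t => by exact_mod_cast hp t
  obtain ⟨c, hcdef⟩ : ∃ c : S → ℝ, ∀ t, c t = lam t / (p t : ℝ) := ⟨_, fun _ => rfl⟩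
  have hc : ∀ t, 0 < c t := fun t => (hcdef t) ▸ div_pos (hlam t).1 (hp0 t)
  have hlcp : ∀ t, lam t = c t * (p t : ℝ) := by
    intro t
    rw [hcdef t, div_mul_cancel₀ _ (ne_of_gt (hp0 t))]
  have hquad : ∀ z > (0:ℝ), ∀ t, c t * (qz z t)^2 = z * (1 - qz z t) := by
    intro z hz t
    have h := (hqz z hz t).2
    have h1 : qz z t < 1 := (hqz z hz t).1.2
    have hne : (1 : ℝ) - qz z t ≠ 0 := by linarith
    rw [div_eq_iff hne] at h
    rw [hcdef t]
    exact h
  have hsqrt : ∀ z > (0:ℝ), ∀ t,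
      Real.sqrt (z^2 + 4 * c t * z) = 2 * c t * qz z t + z := by
    intro z hz t
    have hq0 : 0 < qz z t := (hqz z hz t).1.1
    have heq : z^2 + 4 * c t * z = (2 * c t * qz z t + z)^2 := by
      linear_combination (-4 * c t) * (hquad z hz t)
    have hpos : (0:ℝ) ≤ 2 * c t * qz z t + z := by
      have := mul_pos (hc t) hq0; linarith
    rw [heq, Real.sqrt_sq hpos]
  have hformula : ∀ z > (0:ℝ), ∀ t,
      qz z t = (Real.sqrt (z^2 + 4 * c t * z) - z) / (2 * c t) := by
    intro z hz t
    have h2c : (2 * c t) ≠ 0 := ne_of_gt (by linarith [hc t])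
    rw [hsqrt z hz t, eq_div_iff h2c]
    ring
  -- derivative of q
  have hderivq : ∀ z > (0:ℝ), ∀ t, HasDerivAt (fun x => qz x t)
      ((1 - qz z t)^2 / (c t * qz z t * (2 - qz z t))) z := by
    intro z hz t
    have hct := hc t
    have hq0 : 0 < qz z t := (hqz z hz t).1.1
    have hq1 : qz z t < 1 := (hqz z hz t).1.2
    have hu : HasDerivAt (fun x : ℝ => x^2 + 4 * c t * x) (2 * z + 4 * c t) z := by
      have h1 : HasDerivAt (fun x : ℝ => x^2) (2*z) z := by
        simpa using hasDerivAt_pow 2 z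
      have h2 : HasDerivAt (fun x : ℝ => 4 * c t * x) (4 * c t) z := by
        simpa using (hasDerivAt_id z).const_mul (4 * c t)
      exact h1.add h2
    have hune : z^2 + 4 * c t * z ≠ 0 := by nlinarith
    have hs := hu.sqrt hune
    have hf := (hs.sub (hasDerivAt_id z)).div_const (2 * c t)
    have heqv : (fun x => qz x t) =ᶠ[nhds z]
        (fun x => (Real.sqrt (x^2 + 4 * c t * x) - x) / (2 * c t)) := by
      filter_upwards [isOpen_Ioi.mem_nhds hz] with x hx
      exact hformula x hx t
    have hf' := hf.congr_of_eventuallyEq heqv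
    refine hf'.congr_deriv ?_
    symm
    rw [hsqrt z hz t]
    have h1 : (0:ℝ) < 2 * c t * qz z t + z := by nlinarith
    have h2 : (0:ℝ) < 2 - qz z t := by linarith
    have hne1 : 2 * c t * qz z t + z ≠ 0 := ne_of_gt h1
    have hne2 : c t ≠ 0 := ne_of_gt hct
    have hne3 : qz z t ≠ 0 := ne_of_gt hq0
    have hne4 : (2:ℝ) - qz z t ≠ 0 := ne_of_gt h2
    field_simp
    ring_nf
    linear_combination (4 * (qz z t - 1)) * (hquad z hz t)
  -- derivative of g
  have hgfun : g = fun z => z + ∑ t, lam t * qz z t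
      + ∑ t, lam t * Real.log (1 - qz z t) := funext hg
  have hgderiv : ∀ z > (0:ℝ), HasDerivAt g
      (1 - ∑ t, (p t : ℝ) * (1 - qz z t) / (2 - qz z t)) z := by
    intro z hz
    rw [hgfun]
    have h1 : HasDerivAt (fun x => ∑ t, lam t * qz x t)
        (∑ t, lam t * ((1 - qz z t)^2 / (c t * qz z t * (2 - qz z t)))) z :=
      HasDerivAt.fun_sum fun t _ => (hderivq z hz t).const_mul (lam t)
    have h2 : HasDerivAt (fun x => ∑ t, lam t * Real.log (1 - qz x t))
        (∑ t, lam t * ((0 - (1 - qz z t)^2 / (c t * qz z t * (2 - qz z t))) / (1 - qz z t))) z := by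
      refine HasDerivAt.fun_sum fun t _ => HasDerivAt.const_mul (lam t) ?_
      have hq1 : qz z t < 1 := (hqz z hz t).1.2
      have hne : (1:ℝ) - qz z t ≠ 0 := by linarith
      exact (((hasDerivAt_const z (1:ℝ)).sub (hderivq z hz t)).log hne)
    have hD := ((hasDerivAt_id z).add h1).add h2
    refine hD.congr_deriv ?_
    symm
    have hterm : ∀ t : S,
        lam t * ((1 - qz z t)^2 / (c t * qz z t * (2 - qz z t)))
        + lam t * ((0 - (1 - qz z t)^2 / (c t * qz z t * (2 - qz z t))) / (1 - qz z t))
        = -((p t : ℝ) * (1 - qz z t) / (2 - qz z t)) := by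
      intro t
      have hq0 : 0 < qz z t := (hqz z hz t).1.1
      have hq1 : qz z t < 1 := (hqz z hz t).1.2
      have hne1 : (1:ℝ) - qz z t ≠ 0 := by linarith
      have hne2 : c t ≠ 0 := ne_of_gt (hc t)
      have hne3 : qz z t ≠ 0 := ne_of_gt hq0
      have hne4 : (2:ℝ) - qz z t ≠ 0 := by linarith
      rw [hlcp t]
      field_simp
      ring
    calc 1 - ∑ t, (p t : ℝ) * (1 - qz z t) / (2 - qz z t)
        = 1 + ∑ t, -((p t : ℝ) * (1 - qz z t) / (2 - qz z t)) := by
          rw [Finset.sum_neg_distrib]; ring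
      _ = 1 + (∑ t, (lam t * ((1 - qz z t)^2 / (c t * qz z t * (2 - qz z t)))
            + lam t * ((0 - (1 - qz z t)^2 / (c t * qz z t * (2 - qz z t))) / (1 - qz z t)))) := by
          rw [Finset.sum_congr rfl fun t _ => (hterm t).symm]
      _ = 1 + ∑ t, lam t * ((1 - qz z t)^2 / (c t * qz z t * (2 - qz z t)))
            + ∑ t, lam t * ((0 - (1 - qz z t)^2 / (c t * qz z t * (2 - qz z t))) / (1 - qz z t)) := by
          rw [Finset.sum_add_distrib]; ring
  refine ⟨?_, hgderiv⟩
  -- continuity on Ici 0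
  have hcont : ContinuousOn g (Set.Ici 0) := by
    intro x hx
    rcases eq_or_lt_of_le (Set.mem_Ici.mp hx) with h0 | h0
    · -- x = 0
      subst h0
      set F : ℝ → ℝ := fun z => z
        + ∑ t, lam t * ((Real.sqrt (z^2 + 4 * c t * z) - z) / (2 * c t))
        + ∑ t, lam t * Real.log (1 - (Real.sqrt (z^2 + 4 * c t * z) - z) / (2 * c t))
        with hFdef
      have hf0 : ∀ t, ((Real.sqrt ((0:ℝ)^2 + 4 * c t * 0) - 0) / (2 * c t)) = 0 := by
        intro t; simp
      have hEq : ∀ y ∈ Set.Ici (0:ℝ), g y = F y := by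
        intro y hy
        rcases eq_or_lt_of_le (Set.mem_Ici.mp hy) with h0' | h0'
        · subst h0'
          rw [hg 0, hFdef]
          simp [hqz0, hf0]
        · rw [hg y, hFdef]
          simp only
          congr 1
          · congr 1
            exact Finset.sum_congr rfl fun t _ => by rw [← hformula y h0' t]
          · exact Finset.sum_congr rfl fun t _ => by rw [← hformula y h0' t]
      have hsqcont : ∀ t, ContinuousAt
          (fun z : ℝ => (Real.sqrt (z^2 + 4 * c t * z) - z) / (2 * c t)) 0 := by
        intro t
        exact (((Real.continuous_sqrt.comp ((continuous_pow 2).add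
          (continuous_const.mul continuous_id))).sub continuous_id).div_const
          (2 * c t)).continuousAt
      have hFcont : ContinuousAt F 0 := by
        refine ContinuousAt.add (ContinuousAt.add continuousAt_id ?_) ?_
        · exact tendsto_finset_sum _ fun t _ => (continuousAt_const.mul (hsqcont t))
        · refine tendsto_finset_sum _ fun t _ => ?_
          refine ContinuousAt.mul continuousAt_const ?_
          refine ContinuousAt.log (continuousAt_const.sub (hsqcont t)) ?_
          rw [hf0 t]
          norm_num
      exact (hFcont.continuousWithinAt).congr hEq (hEq 0 (by norm_num))
    · exact ((hgderiv x h0).continuousAt).continuousWithinAt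
  -- strict monotonicity of deriv on interior
  refine StrictMonoOn.strictConvexOn_of_deriv (convex_Ici 0) hcont ?_
  rw [interior_Ici]
  intro a ha b hb hab
  rw [Set.mem_Ioi] at ha hb
  rw [(hgderiv a ha).deriv, (hgderiv b hb).deriv]
  have hqlt : ∀ t, qz a t < qz b t := by
    intro t
    by_contra hle
    push_neg at hle
    have hq0a : 0 < qz a t := (hqz a ha t).1.1
    have hq0b : 0 < qz b t := (hqz b hb t).1.1
    have hq1a : qz a t < 1 := (hqz a ha t).1.2
    have hq1b : qz b t < 1 := (hqz b hb t).1.2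
    nlinarith [hquad a ha t, hquad b hb t, hc t,
      mul_nonneg (mul_nonneg (hc t).le (sub_nonneg.2 hle)) (by linarith : (0:ℝ) ≤ qz a t + qz b t),
      mul_nonneg ha.le (sub_nonneg.2 hle),
      mul_pos (sub_pos.2 hab) (sub_pos.2 hq1b)]
  have hsum : ∑ t, (p t : ℝ) * (1 - qz b t) / (2 - qz b t)
      < ∑ t, (p t : ℝ) * (1 - qz a t) / (2 - qz a t) := by
    refine Finset.sum_lt_sum_of_nonempty Finset.univ_nonempty fun t _ => ?_
    have hq0a : 0 < qz a t := (hqz a ha t).1.1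
    have hq1a : qz a t < 1 := (hqz a ha t).1.2
    have hq1b : qz b t < 1 := (hqz b hb t).1.2
    have h2a : (0:ℝ) < 2 - qz a t := by linarith
    have h2b : (0:ℝ) < 2 - qz b t := by linarith
    rw [div_lt_div_iff₀ h2b h2a]
    nlinarith [mul_pos (hp0 t) (sub_pos.2 (hqlt t))]
  linarith
end

section
/- The function Θ(y) = y + ∑_{t∈S} (p(t)/2)·(−y + √(y² + 4λ(t)/p(t))) is strictly convex on ℝ, and it is twice differentiable with second derivative Θ''(y) = ∑_{t∈S} 2λ(t)/(y² + 4λ(t)/p(t))^{3/2} > 0 for every y ∈ ℝ. -/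
lemma sqrt_aux_deriv {c : ℝ} (hc : 0 < c) (y : ℝ) :
    HasDerivAt (fun y => Real.sqrt (y ^ 2 + c)) (y / Real.sqrt (y ^ 2 + c)) y := by
  have h : 0 < y ^ 2 + c := by positivity
  have h1 : HasDerivAt (fun y : ℝ => y ^ 2 + c) (2 * y) y := by
    simpa using ((hasDerivAt_pow 2 y).add_const c)
  have h2 := (Real.hasDerivAt_sqrt h.ne').comp y h1
  refine h2.congr_deriv ?_
  field_simp

lemma ratio_deriv {c : ℝ} (hc : 0 < c) (y : ℝ) :
    HasDerivAt (fun y => y / Real.sqrt (y ^ 2 + c))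
      (c / (y ^ 2 + c) ^ ((3:ℝ)/2)) y := by
  have h : 0 < y ^ 2 + c := by positivity
  have hs : 0 < Real.sqrt (y ^ 2 + c) := Real.sqrt_pos.mpr h
  have hd := (hasDerivAt_id y).div (sqrt_aux_deriv hc y) hs.ne'
  refine hd.congr_deriv ?_
  have hsq : Real.sqrt (y ^ 2 + c) ^ 2 = y ^ 2 + c := Real.sq_sqrt h.le
  have h32 : (y ^ 2 + c) ^ ((3:ℝ)/2) = (y ^ 2 + c) * Real.sqrt (y ^ 2 + c) := by
    rw [show (3:ℝ)/2 = 1 + 1/2 by norm_num, Real.rpow_add h, Real.rpow_one,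
      ← Real.sqrt_eq_rpow]
  rw [h32]
  simp only [id_eq]
  rw [hsq]
  field_simp
  nlinarith [hsq, hs]

/-- Θ(y) = y + ∑ (p(t)/2)·(−y + √(y² + 4λ(t)/p(t))) is strictly convex on ℝ, and it
is twice differentiable with second derivative
Θ''(y) = ∑ 2λ(t)/(y² + 4λ(t)/p(t))^{3/2} > 0 for every y ∈ ℝ. -/
theorem Theta_strictConvex_and_second_deriv
    {S : Type*} [Fintype S] [Nonempty S]
    (lam : S → ℝ) (p : S → ℕ)
    (hlam : ∀ s, lam s ∈ Set.Ioo (0:ℝ) 1) (hp : ∀ s, 1 ≤ p s)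
    (Θ : ℝ → ℝ)
    (hΘ : ∀ y, Θ y = y + ∑ t, (p t : ℝ) / 2 *
      (-y + Real.sqrt (y ^ 2 + 4 * lam t / (p t : ℝ)))) :
    StrictConvexOn ℝ Set.univ Θ ∧
      ∀ y : ℝ,
        HasDerivAt (deriv Θ)
          (∑ t, 2 * lam t / (y ^ 2 + 4 * lam t / (p t : ℝ)) ^ ((3:ℝ)/2)) y ∧
        0 < ∑ t, 2 * lam t / (y ^ 2 + 4 * lam t / (p t : ℝ)) ^ ((3:ℝ)/2) := by
  set c : S → ℝ := fun t => 4 * lam t / (p t : ℝ) with hc_def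
  have hpne : ∀ t, (p t : ℝ) ≠ 0 := fun t => by
    have := hp t; positivity
  have hc : ∀ t, 0 < c t := fun t => by
    have h1 := (hlam t).1
    have h2 : (0:ℝ) < p t := by exact_mod_cast (hp t)
    exact div_pos (by linarith) h2
  -- first derivative
  set F1 : ℝ → ℝ := fun y => 1 + ∑ t, (p t : ℝ) / 2 * (-1 + y / Real.sqrt (y ^ 2 + c t))
    with hF1
  have hΘfun : Θ = fun y => y + ∑ t, (p t : ℝ) / 2 * (-y + Real.sqrt (y ^ 2 + c t)) :=
    funext hΘ
  have hd1 : ∀ y, HasDerivAt Θ (F1 y) y := by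
    intro y
    rw [hΘfun]
    have : HasDerivAt (fun y : ℝ => ∑ t, (p t : ℝ) / 2 * (-y + Real.sqrt (y ^ 2 + c t)))
        (∑ t, (p t : ℝ) / 2 * (-1 + y / Real.sqrt (y ^ 2 + c t))) y := by
      apply HasDerivAt.fun_sum
      intro t _
      exact ((hasDerivAt_neg y).add (sqrt_aux_deriv (hc t) y)).const_mul _
    exact (hasDerivAt_id' y).add this
  have hderiv : deriv Θ = F1 := funext fun y => (hd1 y).deriv
  have hd2 : ∀ y, HasDerivAt F1
      (∑ t, 2 * lam t / (y ^ 2 + c t) ^ ((3:ℝ)/2)) y := by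
    intro y
    have : HasDerivAt (fun y : ℝ => ∑ t, (p t : ℝ) / 2 * (-1 + y / Real.sqrt (y ^ 2 + c t)))
        (∑ t, 2 * lam t / (y ^ 2 + c t) ^ ((3:ℝ)/2)) y := by
      apply HasDerivAt.fun_sum
      intro t _
      have h := ((hasDerivAt_const y (-1:ℝ)).add (ratio_deriv (hc t) y)).const_mul
        ((p t : ℝ) / 2)
      have hct : (p t : ℝ) / 2 * c t = 2 * lam t := by
        have hpt := hpne t
        simp only [hc_def]
        field_simp
        ring
      refine h.congr_deriv ?_
      rw [zero_add, ← mul_div_assoc, hct]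
    exact ((hasDerivAt_const y (1:ℝ)).add this).congr_deriv (zero_add _)
  have hpos : ∀ y : ℝ, 0 < ∑ t, 2 * lam t / (y ^ 2 + c t) ^ ((3:ℝ)/2) := by
    intro y
    apply Finset.sum_pos _ Finset.univ_nonempty
    intro t _
    have h1 := (hlam t).1
    have h2 : 0 < y ^ 2 + c t := by have := hc t; positivity
    positivity
  refine ⟨?_, fun y => ⟨hderiv ▸ hd2 y, hpos y⟩⟩
  apply strictConvexOn_of_deriv2_pos convex_univ
  · exact (continuous_iff_continuousAt.mpr
      fun y => (hd1 y).differentiableAt.continuousAt).continuousOn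
  · intro x _
    have : deriv (deriv Θ) x = ∑ t, 2 * lam t / (x ^ 2 + c t) ^ ((3:ℝ)/2) := by
      rw [hderiv]; exact (hd2 x).deriv
    simpa [Function.iterate_succ, this] using hpos x
end

section
/- If ∑_{s∈S} p(s) ≥ 3, then there exists y₀ > 0 such that the function Υ(y) = y²·∏_{s∈S} (Γ(s)/y + 1)^{p(s)} is strictly decreasing on (0,y₀] and strictly increasing on [y₀,∞); moreover Υ(y) → ∞ as y → 0⁺ and Υ(y) → ∞ as y → ∞. -/
open Filter

/-- If ∑ p(s) ≥ 3, then there is y₀ > 0 such that Υ(y) = y²·∏ (Γ(s)/y + 1)^{p(s)}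
strictly decreases on (0,y₀], strictly increases on [y₀,∞), and Υ(y) → ∞ both as
y → 0⁺ and as y → ∞. -/
theorem Upsilon_shape
    {S : Type*} [Fintype S] [Nonempty S]
    (p : S → ℕ) (hp : ∀ s, 1 ≤ p s) (hP : 3 ≤ ∑ s, p s)
    (Γ : S → ℝ) (hΓ : ∀ s, 0 < Γ s)
    (Υ : ℝ → ℝ)
    (hΥ : ∀ y, Υ y = y ^ 2 * ∏ s, (Γ s / y + 1) ^ (p s)) :
    ∃ y₀ > (0:ℝ),
      StrictAntiOn Υ (Set.Ioc 0 y₀) ∧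
      StrictMonoOn Υ (Set.Ici y₀) ∧
      Tendsto Υ (nhdsWithin 0 (Set.Ioi 0)) atTop ∧
      Tendsto Υ atTop atTop := by
  classical
  set P : ℝ := ∑ s, (p s : ℝ) with hPdef
  have hP3 : (3:ℝ) ≤ P := by
    rw [hPdef]; exact_mod_cast Nat.cast_le.mpr hP |>.trans_eq (by push_cast; ring)
  set h : ℝ → ℝ := fun y => 2 - ∑ s, (p s : ℝ) * (Γ s / (Γ s + y)) with hhdef
  set L : ℝ → ℝ := fun y => 2 * Real.log y + ∑ s, (p s : ℝ) * Real.log (Γ s / y + 1)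
    with hLdef
  have hden : ∀ s, ∀ y : ℝ, 0 ≤ y → 0 < Γ s + y := fun s y hy => by linarith [hΓ s]
  -- h strictly monotone on [0,∞)
  have hmono : StrictMonoOn h (Set.Ici 0) := by
    intro x hx y hy hxy
    simp only [hhdef, sub_lt_sub_iff_left]
    apply Finset.sum_lt_sum_of_nonempty Finset.univ_nonempty
    intro s _
    have h1 : 0 < Γ s + x := hden s x hx
    have h2 : Γ s + x < Γ s + y := by linarith
    have hdd : Γ s / (Γ s + y) < Γ s / (Γ s + x) := by
      exact div_lt_div_of_pos_left (hΓ s) h1 h2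
    have hps : (0:ℝ) < (p s : ℝ) := by exact_mod_cast hp s
    exact mul_lt_mul_of_pos_left hdd hps
  have hh0 : h 0 = 2 - P := by
    simp only [hhdef]
    congr 1
    rw [hPdef]
    apply Finset.sum_congr rfl
    intro s _
    rw [add_zero, div_self (hΓ s).ne', mul_one]
  -- a point where h is positive
  set b : ℝ := ∑ s, (p s : ℝ) * Γ s with hbdef
  have hbpos : 0 < b := by
    rw [hbdef]
    apply Finset.sum_pos _ Finset.univ_nonempty
    intro s _
    have : (0:ℝ) < (p s : ℝ) := by exact_mod_cast hp s
    exact mul_pos this (hΓ s)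
  have hhb : 0 < h b := by
    have hlt : ∑ s, (p s : ℝ) * (Γ s / (Γ s + b)) < ∑ s, (p s : ℝ) * Γ s / b := by
      apply Finset.sum_lt_sum_of_nonempty Finset.univ_nonempty
      intro s _
      have h1 : 0 < Γ s + b := by linarith [hΓ s]
      have hps : (0:ℝ) < (p s : ℝ) := by exact_mod_cast hp s
      rw [mul_div_assoc]
      apply mul_lt_mul_of_pos_left _ hps
      exact div_lt_div_of_pos_left (hΓ s) hbpos (by linarith [hΓ s])
    have hsum : ∑ s, (p s : ℝ) * Γ s / b = 1 := by
      rw [← Finset.sum_div, ← hbdef, div_self hbpos.ne']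
    simp only [hhdef]
    linarith [hlt.trans_eq hsum]
  have hh0neg : h 0 < 0 := by rw [hh0]; linarith
  -- continuity of h on [0, b]
  have hcont : ContinuousOn h (Set.Icc 0 b) := by
    apply continuousOn_const.sub
    apply continuousOn_finset_sum
    intro s _
    apply ContinuousOn.mul continuousOn_const
    apply ContinuousOn.div continuousOn_const (by fun_prop)
    intro y hy
    exact (hden s y hy.1).ne'
  -- IVT
  obtain ⟨y₀, hy₀mem, hy₀⟩ : ∃ y₀ ∈ Set.Ioo (0:ℝ) b, h y₀ = 0 := by
    have hsub := intermediate_value_Ioo (le_of_lt hbpos) hcont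
    obtain ⟨y₀, hmem, heq⟩ := hsub ⟨hh0neg, hhb⟩
    exact ⟨y₀, hmem, heq⟩
  have hy₀pos : 0 < y₀ := hy₀mem.1
  have hneg : ∀ x, 0 < x → x < y₀ → h x < 0 := by
    intro x hx hxy
    have := hmono (le_of_lt hx) (le_of_lt hy₀pos) hxy
    linarith [hy₀]
  have hpos : ∀ x, y₀ < x → 0 < h x := by
    intro x hxy
    have := hmono (le_of_lt hy₀pos) (le_of_lt (hy₀pos.trans hxy)) hxy
    linarith [hy₀]
  -- derivative of L
  have hL' : ∀ y : ℝ, 0 < y → HasDerivAt L (h y / y) y := by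
    intro y hy
    have h1 : HasDerivAt (fun y : ℝ => 2 * Real.log y) (2 * y⁻¹) y :=
      (Real.hasDerivAt_log hy.ne').const_mul 2
    have h2 : ∀ s, HasDerivAt (fun y => (p s:ℝ) * Real.log (Γ s / y + 1))
        (-((p s:ℝ) * Γ s / (y * (Γ s + y)))) y := by
      intro s
      have hu : HasDerivAt (fun y : ℝ => Γ s / y + 1) (Γ s * (-(y^2)⁻¹)) y := by
        simpa [div_eq_mul_inv] using ((hasDerivAt_inv hy.ne').const_mul (Γ s)).add_const 1
      have hupos : 0 < Γ s / y + 1 := by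
        have := div_pos (hΓ s) hy; linarith
      have hlog := (Real.hasDerivAt_log hupos.ne').comp y hu
      have := hlog.const_mul (p s : ℝ)
      refine this.congr_deriv (Eq.symm ?_)
      have hy' : y ≠ 0 := hy.ne'
      have hgy : Γ s + y ≠ 0 := (hden s y hy.le).ne'
      field_simp
    have hsum := HasDerivAt.fun_sum (fun s (_ : s ∈ Finset.univ) => h2 s)
    have := h1.add hsum
    refine this.congr_deriv (Eq.symm ?_)
    simp only [hhdef]
    have hy' : y ≠ 0 := hy.ne'
    rw [sub_div, Finset.sum_div, sub_eq_add_neg, ← Finset.sum_neg_distrib]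
    congr 1
    apply Finset.sum_congr rfl
    intro s _
    have hgy : Γ s + y ≠ 0 := (hden s y hy.le).ne'
    rw [neg_inj, mul_div_assoc, div_div, mul_comm (Γ s + y) y, mul_div_assoc]
  -- monotonicity of L
  have hLanti : StrictAntiOn L (Set.Ioc 0 y₀) := by
    apply strictAntiOn_of_deriv_neg (convex_Ioc 0 y₀)
    · intro x hx
      exact (hL' x hx.1).continuousAt.continuousWithinAt
    · intro x hx
      rw [interior_Ioc] at hx
      rw [(hL' x hx.1).deriv]
      exact div_neg_of_neg_of_pos (hneg x hx.1 hx.2) hx.1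
  have hLmono : StrictMonoOn L (Set.Ici y₀) := by
    apply strictMonoOn_of_deriv_pos (convex_Ici y₀)
    · intro x hx
      exact (hL' x (hy₀pos.trans_le hx)).continuousAt.continuousWithinAt
    · intro x hx
      rw [interior_Ici] at hx
      rw [(hL' x (hy₀pos.trans hx)).deriv]
      exact div_pos (hpos x hx) (hy₀pos.trans hx)
  -- L → ∞ as y → 0⁺
  have hL0 : Tendsto L (nhdsWithin 0 (Set.Ioi 0)) atTop := by
    have heq : ∀ y ∈ Set.Ioi (0:ℝ),
        (2 - P) * Real.log y + ∑ s, (p s:ℝ) * Real.log (Γ s + y) = L y := by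
      intro y hy
      simp only [hLdef]
      have hterm : ∀ s ∈ Finset.univ, (p s:ℝ) * Real.log (Γ s / y + 1)
          = (p s:ℝ) * Real.log (Γ s + y) - (p s:ℝ) * Real.log y := by
        intro s _
        have hy0 : (0:ℝ) < y := hy
        have h1 : Γ s / y + 1 = (Γ s + y) / y := by field_simp
        rw [h1, Real.log_div (hden s y hy0.le).ne' hy0.ne', mul_sub]
      rw [Finset.sum_congr rfl hterm, Finset.sum_sub_distrib, ← Finset.sum_mul, ← hPdef]
      ring
    have h1 : Tendsto (fun y => (2 - P) * Real.log y) (nhdsWithin 0 (Set.Ioi 0)) atTop := by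
      have hc : (2 - P) < 0 := by linarith
      exact Tendsto.const_mul_atBot_of_neg hc Real.tendsto_log_nhdsGT_zero
    have h2 : Tendsto (fun y => ∑ s, (p s:ℝ) * Real.log (Γ s + y))
        (nhdsWithin 0 (Set.Ioi 0)) (nhds (∑ s, (p s:ℝ) * Real.log (Γ s + 0))) := by
      apply Tendsto.mono_left _ nhdsWithin_le_nhds
      apply tendsto_finset_sum
      intro s _
      apply Tendsto.const_mul
      have h4 : Tendsto (fun y : ℝ => Γ s + y) (nhds 0) (nhds (Γ s + 0)) :=
        (continuous_const.add continuous_id).tendsto 0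
      exact (Real.continuousAt_log (x := Γ s + 0) (by simp [(hΓ s).ne'])).tendsto.comp h4
    have h3 := tendsto_atTop_add_right_of_le' _ ((∑ s, (p s:ℝ) * Real.log (Γ s + 0)) - 1) h1
      (h2.eventually (eventually_gt_nhds (by linarith)) |>.mono fun x hx => hx.le)
    exact Tendsto.congr' (eventually_nhdsWithin_of_forall heq) h3
  -- L → ∞ as y → ∞
  have hLtop : Tendsto L atTop atTop := by
    have h1 : Tendsto (fun y => 2 * Real.log y) atTop atTop :=
      Tendsto.const_mul_atTop (by norm_num) Real.tendsto_log_atTop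
    have h2 : Tendsto (fun y => ∑ s, (p s:ℝ) * Real.log (Γ s / y + 1))
        atTop (nhds (∑ s : S, (0:ℝ))) := by
      apply tendsto_finset_sum
      intro s _
      have hdiv : Tendsto (fun y : ℝ => Γ s / y + 1) atTop (nhds 1) := by
        have := Tendsto.div_atTop (tendsto_const_nhds (x := Γ s)) tendsto_id
        simpa using this.add_const 1
      have hl : Tendsto (fun y : ℝ => Real.log (Γ s / y + 1)) atTop (nhds 0) := by
        have := (Real.continuousAt_log (by norm_num : (1:ℝ) ≠ 0)).tendsto.comp hdiv
        simpa [Function.comp_def] using this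
      simpa using hl.const_mul (p s : ℝ)
    have h3 := tendsto_atTop_add_right_of_le' _ ((∑ s : S, (0:ℝ)) - 1) h1
      (h2.eventually (eventually_gt_nhds (by linarith)) |>.mono fun x hx => hx.le)
    exact h3
  -- Υ = exp ∘ L on positives
  have hexp : ∀ y : ℝ, 0 < y → Υ y = Real.exp (L y) := by
    intro y hy
    rw [hΥ, hLdef]
    simp only
    rw [Real.exp_add, Real.exp_sum]
    congr 1
    · rw [show (2:ℝ) * Real.log y = Real.log (y^2) by rw [Real.log_pow]; push_cast; ring,
        Real.exp_log (by positivity)]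
    · apply Finset.prod_congr rfl
      intro s _
      have hupos : 0 < Γ s / y + 1 := by
        have := div_pos (hΓ s) hy; linarith
      rw [show ((p s : ℝ)) * Real.log (Γ s / y + 1) = Real.log ((Γ s / y + 1) ^ (p s)) by
        rw [Real.log_pow], Real.exp_log (by positivity)]
  refine ⟨y₀, hy₀pos, ?_, ?_, ?_, ?_⟩
  · intro a ha c hc hac
    rw [hexp a ha.1, hexp c hc.1]
    exact Real.exp_lt_exp.mpr (hLanti ha hc hac)
  · intro a ha c hc hac
    rw [hexp a (hy₀pos.trans_le ha), hexp c (hy₀pos.trans_le hc)]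
    exact Real.exp_lt_exp.mpr (hLmono ha hc hac)
  · have : Tendsto (fun y => Real.exp (L y)) (nhdsWithin 0 (Set.Ioi 0)) atTop :=
      Real.tendsto_exp_atTop.comp hL0
    apply this.congr'
    exact eventually_nhdsWithin_of_forall fun y hy => (hexp y hy).symm
  · have : Tendsto (fun y => Real.exp (L y)) atTop atTop :=
      Real.tendsto_exp_atTop.comp hLtop
    apply this.congr'
    filter_upwards [eventually_gt_atTop 0] with y hy
    exact (hexp y hy).symm
end

section
/- Suppose β > 0, E > 0 and q ∈ (0,1)^S satisfy, for every s ∈ S, the equation λ(s)/(1−q(s)) + β²ξ(q)·(−p(s)·(1−q(s))/q(s)² + (p(s)/q(s))·∑_{t∈S} p(t)·(1−q(t))/q(t)) = βE√(ξ(q))·p(s)/q(s), together with the two equalities β²ξ(q)·(1 + ∑_{t∈S} p(t)·(1−q(t))/q(t)) = −∑_{t∈S} λ(t)·log(1−q(t)) = βE√(ξ(q)). Then: (i) for every s ∈ S, (λ(s)/p(s))·q(s)²/(1−q(s)) = Φ(q); (ii) β² = Φ(q)/ξ(q); and (iii) E = √(V(q)·U(q)). -/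
/-- Suppose β > 0, E > 0 and q ∈ (0,1)^S satisfy, for all s, equation (I)
λ(s)/(1−q(s)) + β²ξ(q)·(−p(s)(1−q(s))/q(s)² + (p(s)/q(s))∑ p(t)(1−q(t))/q(t))
= βE√ξ(q)·p(s)/q(s), and the two equalities (II)
β²ξ(q)(1 + ∑ p(t)(1−q(t))/q(t)) = −∑ λ(t)log(1−q(t)) = βE√ξ(q).
Then (i) (λ(s)/p(s))·q(s)²/(1−q(s)) = Φ(q) for all s; (ii) β² = Φ(q)/ξ(q);
(iii) E = √(V(q)·U(q)). Here ξ(q) = ∏ q(s)^{p(s)}, V(q) = −∑ λ(t)log(1−q(t)),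
U(q) = 1 + ∑ p(t)(1−q(t))/q(t), Φ(q) = V(q)/U(q). -/
theorem critical_point_equations
    {S : Type*} [Fintype S] [Nonempty S]
    (lam : S → ℝ) (p : S → ℕ)
    (hlam : ∀ s, lam s ∈ Set.Ioo (0:ℝ) 1) (hp : ∀ s, 1 ≤ p s)
    (β E : ℝ) (hβ : 0 < β) (hE : 0 < E)
    (q : S → ℝ) (hq : ∀ s, q s ∈ Set.Ioo (0:ℝ) 1)
    (hI : ∀ s, lam s / (1 - q s) +
        β ^ 2 * (∏ u, q u ^ p u) *
          (-(p s : ℝ) * (1 - q s) / (q s) ^ 2 +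
            (p s : ℝ) / q s * ∑ t, (p t : ℝ) * (1 - q t) / q t)
      = β * E * Real.sqrt (∏ u, q u ^ p u) * ((p s : ℝ) / q s))
    (hII₁ : β ^ 2 * (∏ u, q u ^ p u) * (1 + ∑ t, (p t : ℝ) * (1 - q t) / q t)
      = -∑ t, lam t * Real.log (1 - q t))
    (hII₂ : (-∑ t, lam t * Real.log (1 - q t))
      = β * E * Real.sqrt (∏ u, q u ^ p u)) :
    (∀ s, lam s / (p s : ℝ) * (q s) ^ 2 / (1 - q s) =
        (-∑ t, lam t * Real.log (1 - q t)) /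
          (1 + ∑ t, (p t : ℝ) * (1 - q t) / q t)) ∧
    β ^ 2 = ((-∑ t, lam t * Real.log (1 - q t)) /
        (1 + ∑ t, (p t : ℝ) * (1 - q t) / q t)) / (∏ u, q u ^ p u) ∧
    E = Real.sqrt ((-∑ t, lam t * Real.log (1 - q t)) *
        (1 + ∑ t, (p t : ℝ) * (1 - q t) / q t)) := by
  set X : ℝ := ∏ u, q u ^ p u with hXdef
  set A : ℝ := ∑ t, (p t : ℝ) * (1 - q t) / q t with hAdef
  set V : ℝ := -∑ t, lam t * Real.log (1 - q t) with hVdef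
  have hX0 : 0 < X := Finset.prod_pos fun u _ => pow_pos (hq u).1 _
  have hA0 : 0 ≤ A := Finset.sum_nonneg fun t _ =>
    div_nonneg (mul_nonneg (Nat.cast_nonneg _) (by linarith [(hq t).2])) (hq t).1.le
  have hU0 : (0:ℝ) < 1 + A := by linarith
  have hsX : Real.sqrt X ^ 2 = X := Real.sq_sqrt hX0.le
  -- key pointwise identity
  have key : ∀ s, lam s * q s ^ 2 = β ^ 2 * X * (p s : ℝ) * (1 - q s) := by
    intro s
    have h1 : lam s / (1 - q s) +
        β ^ 2 * X * (-(p s : ℝ) * (1 - q s) / (q s) ^ 2 +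
          (p s : ℝ) / q s * A)
      = β ^ 2 * X * (1 + A) * ((p s : ℝ) / q s) := by
      rw [hII₁, hII₂]; exact hI s
    have hqs := hq s
    have hq0 : q s ≠ 0 := ne_of_gt hqs.1
    have hq1 : (1 : ℝ) - q s ≠ 0 := by linarith [hqs.2]
    field_simp at h1
    have h2 : (lam s * q s ^ 2) * q s ^ 2 = (β ^ 2 * X * (p s : ℝ) * (1 - q s)) * q s ^ 2 := by
      linear_combination (q s ^ 2) * h1
    exact mul_right_cancel₀ (pow_ne_zero 2 hq0) h2
  have hE2 : E ^ 2 = V * (1 + A) := by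
    have h2 : V ^ 2 = β ^ 2 * E ^ 2 * X := by
      rw [hII₂, mul_pow, mul_pow, hsX]
    have h3 : β ^ 2 * X * E ^ 2 = β ^ 2 * X * (V * (1 + A)) := by
      linear_combination (-1 : ℝ) * h2 + (-V) * hII₁
    exact mul_left_cancel₀ (by positivity) h3
  refine ⟨?_, ?_, ?_⟩
  · intro s
    have hqs := hq s
    have hq0 : q s ≠ 0 := ne_of_gt hqs.1
    have hq1 : (1 : ℝ) - q s ≠ 0 := by linarith [hqs.2]
    have hP0 : (p s : ℝ) ≠ 0 := by
      have := hp s; positivity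
    rw [← hII₁]
    field_simp
    linear_combination key s
  · rw [← hII₁]
    field_simp
  · rw [← hE2, Real.sqrt_sq hE.le]
end

section
/- Suppose β > 0, E > 0 and q ∈ (0,1)^S satisfy, for every s ∈ S, the equation λ(s)/(1−q(s)) + β²ξ(q)·(−p(s)·(1−q(s))/q(s)² + (p(s)/q(s))·∑_{t∈S} p(t)·(1−q(t))/q(t)) = βE√(ξ(q))·p(s)/q(s). Define Γ(s) = β√(ξ(q))·(1−q(s))/q(s) and A = ∑_{t∈S} p(t)·Γ(t). Then: (i) for every s ∈ S, (λ(s)/p(s))·(1/Γ(s)) − Γ(s) = E − A; (ii) for every s ∈ S, Γ(s) = (−(E−A) + √((E−A)² + 4λ(s)/p(s)))/2; and (iii) Θ(E−A) = E, where Θ(y) = y + ∑_{t∈S} (p(t)/2)·(−y + √(y² + 4λ(t)/p(t))). -/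
private lemma gamma_aux (lam c B E qs ps : ℝ) (hq0 : 0 < qs) (hq1' : 0 < 1 - qs)
    (hps : 0 < ps) (hc : 0 < c)
    (hI' : lam / (1 - qs) + (c*c) * (-ps * (1 - qs) / qs ^ 2 + ps / qs * B)
      = c * E * (ps / qs)) :
    lam / ps * (1 / (c * ((1 - qs) / qs))) - c * ((1 - qs) / qs) = E - c * B := by
  have h1 : (1 - qs) ≠ 0 := hq1'.ne'
  have h2 : qs ≠ 0 := hq0.ne'
  have h3 : ps ≠ 0 := hps.ne'
  have h4 : c ≠ 0 := hc.ne'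
  field_simp at hI'
  have hmc : lam*qs^2 + c^2*ps*(1-qs)*(B*qs-(1-qs)) = c*E*ps*(1-qs)*qs :=
    mul_right_cancel₀ (pow_ne_zero 2 h2) (by linear_combination qs^2 * hI')
  have h5 : E = (lam*qs^2 + c^2*ps*(1-qs)*(B*qs-(1-qs)))/(c*ps*(1-qs)*qs) := by
    rw [eq_div_iff (by positivity)]
    linear_combination -hmc
  rw [h5]
  field_simp
  ring

/-- Suppose β > 0, E > 0 and q ∈ (0,1)^S satisfy equation (I) for every s. With
Γ(s) = β√ξ(q)·(1−q(s))/q(s) and A = ∑ p(t)Γ(t), then: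
(i) (λ(s)/p(s))·(1/Γ(s)) − Γ(s) = E − A for all s;
(ii) Γ(s) = (−(E−A) + √((E−A)² + 4λ(s)/p(s)))/2 for all s;
(iii) Θ(E−A) = E where Θ(y) = y + ∑ (p(t)/2)(−y + √(y² + 4λ(t)/p(t))). -/
theorem Gamma_equations
    {S : Type*} [Fintype S] [Nonempty S]
    (lam : S → ℝ) (p : S → ℕ)
    (hlam : ∀ s, lam s ∈ Set.Ioo (0:ℝ) 1) (hp : ∀ s, 1 ≤ p s)
    (β E : ℝ) (hβ : 0 < β) (hE : 0 < E)
    (q : S → ℝ) (hq : ∀ s, q s ∈ Set.Ioo (0:ℝ) 1)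
    (hI : ∀ s, lam s / (1 - q s) +
        β ^ 2 * (∏ u, q u ^ p u) *
          (-(p s : ℝ) * (1 - q s) / (q s) ^ 2 +
            (p s : ℝ) / q s * ∑ t, (p t : ℝ) * (1 - q t) / q t)
      = β * E * Real.sqrt (∏ u, q u ^ p u) * ((p s : ℝ) / q s))
    (Γ : S → ℝ)
    (hΓ : ∀ s, Γ s = β * Real.sqrt (∏ u, q u ^ p u) * ((1 - q s) / q s))
    (A : ℝ) (hA : A = ∑ t, (p t : ℝ) * Γ t) :
    (∀ s, lam s / (p s : ℝ) * (1 / Γ s) - Γ s = E - A) ∧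
    (∀ s, Γ s = (-(E - A) +
      Real.sqrt ((E - A) ^ 2 + 4 * lam s / (p s : ℝ))) / 2) ∧
    (E - A) + ∑ t, (p t : ℝ) / 2 *
        (-(E - A) + Real.sqrt ((E - A) ^ 2 + 4 * lam t / (p t : ℝ))) = E := by
  have hξ : (0:ℝ) < ∏ u, q u ^ p u :=
    Finset.prod_pos fun u _ => pow_pos (hq u).1 _
  have hs : 0 < Real.sqrt (∏ u, q u ^ p u) := Real.sqrt_pos.2 hξ
  have hsq : Real.sqrt (∏ u, q u ^ p u) * Real.sqrt (∏ u, q u ^ p u)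
      = ∏ u, q u ^ p u := Real.mul_self_sqrt hξ.le
  set c := β * Real.sqrt (∏ u, q u ^ p u) with hcdef
  have hc : 0 < c := mul_pos hβ hs
  have hc2 : c * c = β ^ 2 * ∏ u, q u ^ p u := by
    rw [hcdef]; nlinarith [hsq]
  have hrhs : ∀ s, β * E * Real.sqrt (∏ u, q u ^ p u) * ((p s : ℝ) / q s)
      = c * E * ((p s : ℝ) / q s) := by
    intro s; rw [hcdef]; ring
  set B := ∑ t, (p t:ℝ) * (1 - q t) / q t with hB
  have hAB : A = c * B := by
    rw [hA, hB, Finset.mul_sum]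
    refine Finset.sum_congr rfl fun t _ => ?_
    rw [hΓ t]; ring
  have hΓpos : ∀ s, 0 < Γ s := by
    intro s
    rw [hΓ s]
    have h1 := (hq s).1
    have h2 := sub_pos.2 (hq s).2
    positivity
  have key : ∀ s, lam s / (p s : ℝ) * (1 / Γ s) - Γ s = E - A := by
    intro s
    have hI' := hI s
    rw [← hc2, hrhs s] at hI'
    obtain ⟨hq0, hq1⟩ := hq s
    have hq1' : (0:ℝ) < 1 - q s := sub_pos.2 hq1
    have hps : (0:ℝ) < p s := by exact_mod_cast (hp s)
    rw [hΓ s, hAB]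
    exact gamma_aux (lam s) c B E (q s) (p s) hq0 hq1' hps hc hI'
  have key2 : ∀ s, Γ s = (-(E - A) +
      Real.sqrt ((E - A) ^ 2 + 4 * lam s / (p s : ℝ))) / 2 := by
    intro s
    have hk := key s
    have hΓs := hΓpos s
    have hps : (0:ℝ) < p s := by exact_mod_cast (hp s)
    have hlams := (hlam s).1
    have h1 : lam s / (p s : ℝ) = (E - A) * Γ s + Γ s ^ 2 := by
      have h := hk
      field_simp at h ⊢
      linear_combination h
    have h2 : (E - A) ^ 2 + 4 * lam s / (p s : ℝ) = (2 * Γ s + (E - A)) ^ 2 := by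
      have h4 : 4 * lam s / (p s : ℝ) = 4 * (lam s / (p s : ℝ)) := by ring
      rw [h4, h1]; ring
    have h3 : 0 < 2 * Γ s + (E - A) := by
      have he : Γ s + (E - A) = lam s / (p s : ℝ) * (1 / Γ s) := by linarith
      have hpos : 0 < lam s / (p s : ℝ) * (1 / Γ s) := by positivity
      linarith
    rw [h2, Real.sqrt_sq h3.le]
    ring
  refine ⟨key, key2, ?_⟩
  have hsum : ∑ t, (p t : ℝ) / 2 *
      (-(E - A) + Real.sqrt ((E - A) ^ 2 + 4 * lam t / (p t : ℝ)))
      = ∑ t, (p t : ℝ) * Γ t := by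
    refine Finset.sum_congr rfl fun t _ => ?_
    rw [key2 t]; ring
  rw [hsum, ← hA]; ring
end

section
/- Suppose S has at least two elements and p(s) ≥ 1 for every s ∈ S. Then for every nonempty open convex subset U of the positive orthant {x ∈ ℝ^S : x(s) > 0 for all s ∈ S}, the function ξ(x) = ∏_{s∈S} x(s)^{p(s)} is not convex on U. -/
open Finset

private lemma key_aux (a b : ℕ) (u v : ℝ) (hu : 0 < u) (hv : 0 < v) (hu1 : u ≠ 1)
    (ha : 1 ≤ a) (hsum : (a : ℝ) * u + (b : ℝ) * v = (a : ℝ) + b) :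
    u ^ a * v ^ b < 1 := by
  have ha' : (1:ℝ) ≤ (a:ℝ) := by exact_mod_cast ha
  have h2 : Real.log u < u - 1 := Real.log_lt_sub_one_of_pos hu hu1
  have h3 : Real.log v ≤ v - 1 := Real.log_le_sub_one_of_pos hv
  have hlog : Real.log (u ^ a * v ^ b) < 0 := by
    rw [Real.log_mul (by positivity) (by positivity), Real.log_pow, Real.log_pow]
    have hb : (0:ℝ) ≤ (b:ℝ) := Nat.cast_nonneg b
    nlinarith [mul_lt_mul_of_pos_left h2 (by linarith : (0:ℝ) < (a:ℝ)),
      mul_le_mul_of_nonneg_left h3 hb]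
  exact (Real.log_neg_iff (by positivity)).mp hlog

private lemma prod_aux {S : Type*} [Fintype S] [DecidableEq S]
    (p : S → ℕ) (x : S → ℝ) (s₀ s₁ : S) (h : s₀ ≠ s₁) (u v : ℝ) :
    ∏ s, (x s * (if s = s₀ then u else if s = s₁ then v else 1)) ^ p s
      = (∏ s, x s ^ p s) * (u ^ p s₀ * v ^ p s₁) := by
  simp_rw [mul_pow, Finset.prod_mul_distrib]
  congr 1
  have hsub : ({s₀, s₁} : Finset S) ⊆ Finset.univ := Finset.subset_univ _
  rw [← Finset.prod_subset hsub (by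
    intro s _ hs
    simp only [Finset.mem_insert, Finset.mem_singleton, not_or] at hs
    simp [hs.1, hs.2])]
  rw [Finset.prod_pair h]
  simp [h, h.symm]

/-- If S has at least two elements and p(s) ≥ 1 for all s, then for every nonempty
open convex subset U of the positive orthant, ξ(x) = ∏ x(s)^{p(s)} is not convex
on U. -/
theorem xi_not_convex
    {S : Type*} [Fintype S] (hS : 1 < Fintype.card S)
    (p : S → ℕ) (hp : ∀ s, 1 ≤ p s)
    (U : Set (S → ℝ)) (hUne : U.Nonempty) (hUopen : IsOpen U)
    (hUconv : Convex ℝ U)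
    (hUpos : U ⊆ {x : S → ℝ | ∀ s, 0 < x s}) :
    ¬ ConvexOn ℝ U (fun x : S → ℝ => ∏ s, x s ^ p s) := by
  classical
  intro hconv
  obtain ⟨x, hxU⟩ := hUne
  obtain ⟨s₀, s₁, hne⟩ := Fintype.exists_pair_of_one_lt_card hS
  obtain ⟨r, hr, hball⟩ := Metric.isOpen_iff.mp hUopen x hxU
  set a : ℕ := p s₀ with ha_def
  set b : ℕ := p s₁ with hb_def
  have hx0 : 0 < x s₀ := hUpos hxU s₀
  have hx1 : 0 < x s₁ := hUpos hxU s₁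
  have ha1 : (1:ℝ) ≤ (a:ℝ) := by exact_mod_cast hp s₀
  have hb1 : (1:ℝ) ≤ (b:ℝ) := by exact_mod_cast hp s₁
  set D : ℝ := (b:ℝ) * x s₀ + (a:ℝ) * x s₁ + 1 with hD_def
  have hD : 0 < D := by positivity
  set ε : ℝ := r / D with hε_def
  have hε : 0 < ε := div_pos hr hD
  have hεb : ε * ((b:ℝ) * x s₀) < r := by
    rw [hε_def, div_mul_eq_mul_div, div_lt_iff₀ hD]
    have : (b:ℝ) * x s₀ < D := by nlinarith
    nlinarith
  have hεa : ε * ((a:ℝ) * x s₁) < r := by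
    rw [hε_def, div_mul_eq_mul_div, div_lt_iff₀ hD]
    have : (a:ℝ) * x s₁ < D := by nlinarith
    nlinarith
  set y : S → ℝ := fun s => x s * (if s = s₀ then 1 + ε * b else if s = s₁ then 1 - ε * a else 1) with hy_def
  set z : S → ℝ := fun s => x s * (if s = s₀ then 1 - ε * b else if s = s₁ then 1 + ε * a else 1) with hz_def
  have hmem : ∀ w : S → ℝ, (∀ s, |w s - x s| < r) → w ∈ U := by
    intro w hw
    apply hball
    rw [Metric.mem_ball, dist_eq_norm]
    rw [pi_norm_lt_iff hr]
    intro s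
    simpa [Real.norm_eq_abs] using hw s
  have hyU : y ∈ U := by
    apply hmem
    intro s
    by_cases h0 : s = s₀
    · rw [h0]
      simp only [hy_def, if_pos rfl, if_true]
      have : x s₀ * (1 + ε * b) - x s₀ = ε * ((b:ℝ) * x s₀) := by ring
      rw [this, abs_of_pos (by positivity)]
      exact hεb
    · by_cases h1 : s = s₁
      · rw [h1]
        simp only [hy_def, if_neg hne.symm, if_pos rfl, if_true]
        have : x s₁ * (1 - ε * a) - x s₁ = -(ε * ((a:ℝ) * x s₁)) := by ring
        rw [this, abs_neg, abs_of_pos (by positivity)]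
        exact hεa
      · simp only [hy_def, if_neg h0, if_neg h1]
        simpa using hr
  have hzU : z ∈ U := by
    apply hmem
    intro s
    by_cases h0 : s = s₀
    · rw [h0]
      simp only [hz_def, if_pos rfl, if_true]
      have : x s₀ * (1 - ε * b) - x s₀ = -(ε * ((b:ℝ) * x s₀)) := by ring
      rw [this, abs_neg, abs_of_pos (by positivity)]
      exact hεb
    · by_cases h1 : s = s₁
      · rw [h1]
        simp only [hz_def, if_neg hne.symm, if_pos rfl, if_true]
        have : x s₁ * (1 + ε * a) - x s₁ = ε * ((a:ℝ) * x s₁) := by ring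
        rw [this, abs_of_pos (by positivity)]
        exact hεa
      · simp only [hz_def, if_neg h0, if_neg h1]
        simpa using hr
  -- positivity of the factors
  have h1ma : 0 < 1 - ε * a := by
    have hys : 0 < y s₁ := hUpos hyU s₁
    have : y s₁ = x s₁ * (1 - ε * a) := by
      simp [hy_def, hne.symm]
    rw [this] at hys
    rcases mul_pos_iff.mp hys with ⟨_, h⟩ | ⟨h, _⟩
    · exact h
    · linarith
  have h1mb : 0 < 1 - ε * b := by
    have hzs : 0 < z s₀ := hUpos hzU s₀
    have : z s₀ = x s₀ * (1 - ε * b) := by simp [hz_def]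
    rw [this] at hzs
    rcases mul_pos_iff.mp hzs with ⟨_, h⟩ | ⟨h, _⟩
    · exact h
    · linarith
  have h1pa : 0 < 1 + ε * a := by positivity
  have h1pb : 0 < 1 + ε * b := by positivity
  -- compute products
  have hyprod : ∏ s, y s ^ p s = (∏ s, x s ^ p s) * ((1 + ε * b) ^ a * (1 - ε * a) ^ b) := by
    rw [hy_def]
    exact prod_aux p x s₀ s₁ hne _ _
  have hzprod : ∏ s, z s ^ p s = (∏ s, x s ^ p s) * ((1 - ε * b) ^ a * (1 + ε * a) ^ b) := by
    rw [hz_def]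
    exact prod_aux p x s₀ s₁ hne _ _
  have hfx : 0 < ∏ s, x s ^ p s :=
    Finset.prod_pos fun s _ => pow_pos (hUpos hxU s) _
  have hA : (1 + ε * b) ^ a * (1 - ε * a) ^ b < 1 := by
    apply key_aux a b _ _ h1pb h1ma (by nlinarith) (hp s₀)
    push_cast
    ring
  have hB : (1 - ε * b) ^ a * (1 + ε * a) ^ b < 1 := by
    apply key_aux a b _ _ h1mb h1pa (by nlinarith) (hp s₀)
    push_cast
    ring
  -- midpoint
  have hmid : (1/2 : ℝ) • y + (1/2 : ℝ) • z = x := by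
    funext s
    simp only [Pi.add_apply, Pi.smul_apply, smul_eq_mul, hy_def, hz_def]
    by_cases h0 : s = s₀
    · simp [h0]; ring
    · by_cases h1 : s = s₁
      · rw [h1]; simp [hne.symm]; ring
      · simp [h0, h1]; ring
  have hcv := hconv.2 hyU hzU (by norm_num : (0:ℝ) ≤ 1/2) (by norm_num : (0:ℝ) ≤ 1/2) (by norm_num)
  rw [hmid] at hcv
  simp only [smul_eq_mul] at hcv
  rw [hyprod, hzprod] at hcv
  nlinarith [hfx, hA, hB]
end

section
/- For every q, x ∈ ℝ^S the following polynomial identity holds: ∏_{s∈S} ((1−q(s))·x(s) + q(s))^{p(s)} − ∏_{s∈S} q(s)^{p(s)} − ∑_{s∈S} p(s)·q(s)^{p(s)−1}·(∏_{t∈S, t≠s} q(t)^{p(t)})·(1−q(s))·x(s) = ∑_{k} Δ_{q,k}²·∏_{s∈S} x(s)^{k(s)}, where the sum on the right ranges over all k : S → ℕ with k(s) ≤ p(s) for every s and ∑_{s∈S} k(s) ≥ 2, and Δ_{q,k}² = ∏_{s∈S} C(p(s),k(s))·(1−q(s))^{k(s)}·q(s)^{p(s)−k(s)} with C(n,m)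 the binomial coefficient. -/
/-- The polynomial identity
∏ ((1−q(s))x(s) + q(s))^{p(s)} − ∏ q(s)^{p(s)}
  − ∑_s p(s)·q(s)^{p(s)−1}·(∏_{t≠s} q(t)^{p(t)})·(1−q(s))·x(s)
= ∑_{k ≤ p, |k| ≥ 2} Δ_{q,k}²·∏ x(s)^{k(s)}, where
Δ_{q,k}² = ∏ C(p(s),k(s))·(1−q(s))^{k(s)}·q(s)^{p(s)−k(s)}. -/
theorem mixture_expansion
    {S : Type*} [Fintype S] [Nonempty S] [DecidableEq S]
    (p : S → ℕ) (hp : ∀ s, 1 ≤ p s)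
    (q x : S → ℝ) :
    (∏ s, ((1 - q s) * x s + q s) ^ p s) - (∏ s, q s ^ p s)
      - ∑ s, (p s : ℝ) * q s ^ (p s - 1) *
          (∏ t ∈ Finset.univ.erase s, q t ^ p t) * (1 - q s) * x s
    = ∑ k ∈ Finset.univ.filter
          (fun k : (∀ s : S, Fin (p s + 1)) => 2 ≤ ∑ s, (k s : ℕ)),
        (∏ s, (Nat.choose (p s) (k s) : ℝ) *
            (1 - q s) ^ (k s : ℕ) * q s ^ (p s - (k s : ℕ))) *
          ∏ s, x s ^ (k s : ℕ) := by
  classical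
  set F : (∀ s : S, Fin (p s + 1)) → ℝ := fun k =>
    (∏ s, (Nat.choose (p s) (k s) : ℝ) *
        (1 - q s) ^ (k s : ℕ) * q s ^ (p s - (k s : ℕ))) *
      ∏ s, x s ^ (k s : ℕ) with hF
  -- binomial expansion of each factor
  have h1 : ∀ s : S, ((1 - q s) * x s + q s) ^ p s
      = ∑ k : Fin (p s + 1),
          (Nat.choose (p s) (k : ℕ) : ℝ) * (1 - q s) ^ (k : ℕ) *
            q s ^ (p s - (k : ℕ)) * x s ^ (k : ℕ) := by
    intro s
    rw [add_pow, ← Fin.sum_univ_eq_sum_range]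
    refine Finset.sum_congr rfl fun k _ => ?_
    rw [mul_pow]
    ring
  have key : (∏ s, ((1 - q s) * x s + q s) ^ p s)
      = ∑ k : (∀ s : S, Fin (p s + 1)), F k := by
    rw [Finset.prod_congr rfl (fun s _ => h1 s), Finset.prod_univ_sum]
    rw [Fintype.piFinset_univ]
    refine Finset.sum_congr rfl fun k _ => ?_
    simp only [hF]
    rw [← Finset.prod_mul_distrib]
  -- the map sending s to the indicator function at s
  have hlt : ∀ s : S, 1 < p s + 1 := fun s => Nat.lt_succ_of_le (hp s)
  set e : S → (∀ s : S, Fin (p s + 1)) :=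
    fun s t => if h : t = s then ⟨1, h ▸ hlt s⟩ else 0 with he
  have heval : ∀ s t : S, ((e s t : ℕ)) = if t = s then 1 else 0 := by
    intro s t
    by_cases h : t = s <;> simp [he, h]
  have hsum_e : ∀ s : S, (∑ t, (e s t : ℕ)) = 1 := by
    intro s
    simp only [heval]
    simp
  -- sum over |k| = 1 equals sum over s
  have hone : ∑ k ∈ Finset.univ.filter
        (fun k : (∀ s : S, Fin (p s + 1)) => (∑ s, (k s : ℕ)) = 1), F k
      = ∑ s, (p s : ℝ) * q s ^ (p s - 1) *
          (∏ t ∈ Finset.univ.erase s, q t ^ p t) * (1 - q s) * x s := by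
    rw [← Finset.sum_bij (fun (s : S) _ => e s)]
    · intro s _
      simp only [Finset.mem_filter, Finset.mem_univ, true_and]
      exact hsum_e s
    · intro a _ b _ hab
      by_contra hne
      have h' := congrArg Fin.val (congrFun hab a)
      rw [heval, heval] at h'
      simp [hne] at h'
    · intro k hk
      simp only [Finset.mem_filter, Finset.mem_univ, true_and] at hk
      have hex : ∃ s, (k s : ℕ) ≠ 0 := by
        by_contra h
        push_neg at h
        simp [h] at hk
      obtain ⟨s, hs⟩ := hex
      have hdec := Finset.add_sum_erase Finset.univ (fun t => (k t : ℕ)) (Finset.mem_univ s)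
      beta_reduce at hdec
      have hks : (k s : ℕ) = 1 ∧ ∑ t ∈ Finset.univ.erase s, (k t : ℕ) = 0 := by omega
      have hrest : ∀ t, t ≠ s → (k t : ℕ) = 0 := by
        intro t ht
        exact (Finset.sum_eq_zero_iff.mp hks.2) t (Finset.mem_erase.mpr ⟨ht, Finset.mem_univ t⟩)
      refine ⟨s, Finset.mem_univ s, ?_⟩
      funext t
      apply Fin.ext
      rw [heval]
      by_cases h : t = s
      · subst h; simpa using hks.1.symm
      · simpa [h] using (hrest t h).symm
    · intro s _
      simp only [hF]
      have hx : (∏ t, x t ^ (e s t : ℕ)) = x s := by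
        rw [Finset.prod_eq_single s]
        · simp [heval]
        · intro t _ ht; simp [heval, ht]
        · simp
      have hc : (∏ t, (Nat.choose (p t) (e s t) : ℝ) *
            (1 - q t) ^ (e s t : ℕ) * q t ^ (p t - (e s t : ℕ)))
          = (p s : ℝ) * (1 - q s) * q s ^ (p s - 1) *
              ∏ t ∈ Finset.univ.erase s, q t ^ p t := by
        rw [← Finset.mul_prod_erase Finset.univ _ (Finset.mem_univ s)]
        have h1 : (Nat.choose (p s) (e s s) : ℝ) *
            (1 - q s) ^ (e s s : ℕ) * q s ^ (p s - (e s s : ℕ))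
            = (p s : ℝ) * (1 - q s) * q s ^ (p s - 1) := by
          simp [heval, Nat.choose_one_right]
        rw [h1]
        congr 1
        refine Finset.prod_congr rfl fun t ht => ?_
        have htne : t ≠ s := (Finset.mem_erase.mp ht).1
        simp [heval, htne]
      rw [hx, hc]
      ring
  -- sum over |k| = 0 is the single zero function
  have hzero : ∑ k ∈ Finset.univ.filter
        (fun k : (∀ s : S, Fin (p s + 1)) => (∑ s, (k s : ℕ)) = 0), F k
      = ∏ s, q s ^ p s := by
    have hset : Finset.univ.filter
        (fun k : (∀ s : S, Fin (p s + 1)) => (∑ s, (k s : ℕ)) = 0)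
        = {fun _ => 0} := by
      ext k
      simp only [Finset.mem_filter, Finset.mem_univ, true_and, Finset.mem_singleton,
        Finset.sum_eq_zero_iff]
      constructor
      · intro h; funext t; exact Fin.ext (by simpa using h t)
      · intro h; subst h; simp
    rw [hset, Finset.sum_singleton, hF]
    simp
  -- decompose the full sum
  have hsplit : (∑ k : (∀ s : S, Fin (p s + 1)), F k)
      = (∑ k ∈ Finset.univ.filter
          (fun k : (∀ s : S, Fin (p s + 1)) => 2 ≤ ∑ s, (k s : ℕ)), F k)
        + (∑ k ∈ Finset.univ.filter
          (fun k : (∀ s : S, Fin (p s + 1)) => (∑ s, (k s : ℕ)) = 0), F k)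
        + (∑ k ∈ Finset.univ.filter
          (fun k : (∀ s : S, Fin (p s + 1)) => (∑ s, (k s : ℕ)) = 1), F k) := by
    rw [← Finset.sum_filter_add_sum_filter_not Finset.univ
      (fun k : (∀ s : S, Fin (p s + 1)) => 2 ≤ ∑ s, (k s : ℕ)) F]
    rw [add_assoc]
    congr 1
    have : Finset.univ.filter
        (fun k : (∀ s : S, Fin (p s + 1)) => ¬ 2 ≤ ∑ s, (k s : ℕ))
        = (Finset.univ.filter (fun k : (∀ s : S, Fin (p s + 1)) => (∑ s, (k s : ℕ)) = 0))
          ∪ (Finset.univ.filter (fun k : (∀ s : S, Fin (p s + 1)) => (∑ s, (k s : ℕ)) = 1)) := by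
      ext k
      simp only [Finset.mem_filter, Finset.mem_univ, true_and, Finset.mem_union]
      omega
    rw [this, Finset.sum_union]
    rw [Finset.disjoint_filter]
    intro k _ h0
    omega
  rw [key, hsplit, hone, hzero]
  ring
end
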